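/- arXiv:2012.06327 — 5 statements merged into one kernel-verified Lean document; each statement's English description precedes it below -/
import Mathlib

section
/- Let H be a k-colored r-graph on v vertices (k ≥ r ≥ 2) and suppose that π_n(H) → π as n → ∞. Then for every a > 0 there exist b > 0 and n_0 such that every k-colored r-graph G on n > n_0 vertices with h_n(G) > π + a contains at least b·C(n, v) distinct v-element subsets S of V(G) such that the sub-graph of G induced on S contains a copy of H (i.e., at least b·C(n,v) copies of H). -/
open Finset Filter

structure ColGraph (k r n : ℕ) where
  E : Fin k → Finset (Finset (Fin n))
  card_mem : ∀ i : Fin k, ∀ e ∈ E i, e.card = r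

namespace ColGraph

def IsSubgraph {k r m n : ℕ} (H : ColGraph k r m) (G : ColGraph k r n) : Prop :=
  ∃ f : Fin m → Fin n, Function.Injective f ∧
    ∀ i : Fin k, ∀ e ∈ H.E i, e.image f ∈ G.E i

noncomputable def density {k r n : ℕ} (G : ColGraph k r n) : ℝ :=
  (∑ i : Fin k, ((G.E i).card : ℝ)) / (n.choose r : ℝ)

noncomputable def turanDensityN {k r m : ℕ} (H : ColGraph k r m) (n : ℕ) : ℝ :=
  sSup {x : ℝ | ∃ G : ColGraph k r n, ¬ H.IsSubgraph G ∧ G.density = x}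

def IsHom {k r m p : ℕ} (G : ColGraph k r m) (H : ColGraph k r p) (f : Fin m → Fin p) : Prop :=
  ∀ i : Fin k, ∀ e ∈ G.E i, Set.InjOn f ↑e ∧ e.image f ∈ H.E i

def Colorable {k r m p : ℕ} (G : ColGraph k r m) (H : ColGraph k r p) : Prop :=
  ∃ f : Fin m → Fin p, G.IsHom H f

def blowUp {k r m : ℕ} (H : ColGraph k r m) (s : ℕ) : ColGraph k r (m * s) where
  E i := Finset.univ.filter (fun e : Finset (Fin (m * s)) =>
    e.card = r ∧ e.image (fun x => (finProdFinEquiv.symm x).1) ∈ H.E i)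
  card_mem i e he := (Finset.mem_filter.mp he).2.1

end ColGraph

noncomputable def famTuranDensityN {k r : ℕ} {ι : Type*} {v : ι → ℕ}
    (Hs : ∀ i, ColGraph k r (v i)) (n : ℕ) : ℝ :=
  sSup {x : ℝ | ∃ G : ColGraph k r n, (∀ i, ¬ (Hs i).IsSubgraph G) ∧ G.density = x}

def prodGraph {m p : ℕ} (G₁ : ColGraph 2 2 m) (G₂ : ColGraph 2 2 p) : ColGraph 2 2 (m * p) where
  E i := Finset.univ.filter (fun e : Finset (Fin (m * p)) =>
    e.card = 2 ∧ e.image (fun x => (finProdFinEquiv.symm x).1) ∈ G₁.E i ∧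
      e.image (fun x => (finProdFinEquiv.symm x).2) ∈ G₂.E i)
  card_mem i e he := (Finset.mem_filter.mp he).2.1

def IsBipartite {n : ℕ} (G : ColGraph 2 2 n) : Prop :=
  ∀ i : Fin 2, ∃ part : Fin n → Bool, ∀ e ∈ G.E i, ∃ u ∈ e, ∃ v ∈ e, part u ≠ part v

def mk2 {n : ℕ} (R B : Finset (Finset (Fin n)))
    (hR : ∀ e ∈ R, e.card = 2) (hB : ∀ e ∈ B, e.card = 2) : ColGraph 2 2 n where
  E := fun i => if i = 0 then R else B
  card_mem := by
    intro i e he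
    try dsimp only at he
    split at he
    · exact hR e he
    · exact hB e he

def Tgraph : ColGraph 2 2 4 :=
  mk2 {{0,1},{0,2},{2,3}} {{0,1},{1,2},{2,3}} (by decide) (by decide)

def K3 : ColGraph 2 2 3 :=
  mk2 {{0,1},{0,2},{1,2}} {{0,1},{0,2},{1,2}} (by decide) (by decide)

def K3minus : ColGraph 2 2 3 :=
  mk2 {{0,1},{0,2},{1,2}} {{0,1},{0,2}} (by decide) (by decide)

def T1 : ColGraph 2 2 4 :=
  mk2 {{0,1},{2,3},{0,2},{1,3}} {{0,1},{2,3},{0,3},{1,2}} (by decide) (by decide)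

def T2 : ColGraph 2 2 4 :=
  mk2 {{0,1},{0,3},{1,2},{1,3},{2,3}} {{0,1},{0,2},{0,3},{1,2},{2,3}} (by decide) (by decide)

set_option maxRecDepth 40000 in
def H8 : ColGraph 2 2 8 :=
  mk2 {{0,1},{0,2},{1,3},{2,3},{0,5},{2,6},{3,7},{1,4},{2,4},{0,7},{3,5},{1,6}}
      {{4,5},{4,6},{5,7},{6,7},{1,5},{0,4},{3,6},{2,7},{2,4},{0,7},{3,5},{1,6}}
      (by decide) (by decide)

structure Graph23 (n : ℕ) where
  E2 : Finset (Finset (Fin n))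
  E3 : Finset (Finset (Fin n))
  card2 : ∀ e ∈ E2, e.card = 2
  card3 : ∀ e ∈ E3, e.card = 3

namespace Graph23

noncomputable def density {n : ℕ} (G : Graph23 n) : ℝ :=
  (G.E2.card : ℝ) / (n.choose 2 : ℝ) + (G.E3.card : ℝ) / (n.choose 3 : ℝ)

def IsSubgraph {m n : ℕ} (H : Graph23 m) (G : Graph23 n) : Prop :=
  ∃ f : Fin m → Fin n, Function.Injective f ∧
    (∀ e ∈ H.E2, e.image f ∈ G.E2) ∧ (∀ e ∈ H.E3, e.image f ∈ G.E3)

noncomputable def turanDensityN {m : ℕ} (H : Graph23 m) (n : ℕ) : ℝ :=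
  sSup {x : ℝ | ∃ G : Graph23 n, ¬ H.IsSubgraph G ∧ G.density = x}

end Graph23

def lift23 {m : ℕ} (H : ColGraph 2 2 m) : Graph23 (m + 1) where
  E2 := (H.E 0).image (fun e => e.image Fin.castSucc)
  E3 := (H.E 1).image (fun e => insert (Fin.last m) (e.image Fin.castSucc))
  card2 := by
    intro e he
    simp only [Finset.mem_image] at he
    obtain ⟨e0, he0, rfl⟩ := he
    rw [Finset.card_image_of_injective _ (Fin.castSucc_injective m)]
    exact H.card_mem 0 e0 he0
  card3 := by
    intro e he
    simp only [Finset.mem_image] at he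
    obtain ⟨e0, he0, rfl⟩ := he
    rw [Finset.card_insert_of_notMem (by
      intro h
      simp only [Finset.mem_image] at h
      obtain ⟨x, _, hx⟩ := h
      exact (Fin.castSucc_lt_last x).ne hx)]
    rw [Finset.card_image_of_injective _ (Fin.castSucc_injective m), H.card_mem 1 e0 he0]

def H5 : Graph23 5 where
  E2 := {{0,1},{0,2},{2,3}}
  E3 := {{0,1,4},{0,2,4},{2,3,4}}
  card2 := by decide
  card3 := by decide


section AuxSupersat

/-- Number of `m`-subsets of `Fin n` containing a fixed set `s`. -/
lemma aux_card_supersets {n : ℕ} (s : Finset (Fin n)) (m : ℕ) (hs : s.card ≤ m) :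
    ((Finset.powersetCard m (Finset.univ : Finset (Fin n))).filter (fun M => s ⊆ M)).card
      = (n - s.card).choose (m - s.card) := by
  have hc : (Finset.powersetCard (m - s.card) sᶜ).card = (n - s.card).choose (m - s.card) := by
    rw [Finset.card_powersetCard, Finset.card_compl, Fintype.card_fin]
  rw [← hc]
  refine Finset.card_bij' (fun M _ => M \ s) (fun t _ => t ∪ s) ?_ ?_ ?_ ?_
  · intro M hM
    simp only [Finset.mem_filter, Finset.mem_powersetCard_univ] at hM
    rw [Finset.mem_powersetCard]
    refine ⟨fun x hx => ?_, ?_⟩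
    · simp only [Finset.mem_compl]
      exact fun hxs => (Finset.mem_sdiff.mp hx).2 hxs
    · rw [Finset.card_sdiff_of_subset hM.2, hM.1]
  · intro t ht
    rw [Finset.mem_powersetCard] at ht
    simp only [Finset.mem_filter, Finset.mem_powersetCard_univ]
    have hdisj : Disjoint t s := by
      refine Finset.disjoint_left.mpr fun x hx hxs => ?_
      have := ht.1 hx
      simp only [Finset.mem_compl] at this
      exact this hxs
    constructor
    · rw [Finset.card_union_of_disjoint hdisj, ht.2]
      omega
    · exact Finset.subset_union_right
  · intro M hM
    simp only [Finset.mem_filter] at hM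
    exact Finset.sdiff_union_of_subset hM.2
  · intro t ht
    rw [Finset.mem_powersetCard] at ht
    have hdisj : Disjoint t s := by
      refine Finset.disjoint_left.mpr fun x hx hxs => ?_
      have := ht.1 hx
      simp only [Finset.mem_compl] at this
      exact this hxs
    exact Finset.union_sdiff_cancel_right hdisj

namespace ColGraph

/-- The subgraph of `G` induced on a set `M` of `m` vertices. -/
noncomputable def induce {k r n m : ℕ} (G : ColGraph k r n) (M : Finset (Fin n))
    (h : M.card = m) : ColGraph k r m where
  E i := (Finset.univ : Finset (Finset (Fin m))).filter
    (fun e => e.image (M.orderEmbOfFin h) ∈ G.E i)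
  card_mem i e he := by
    have := G.card_mem i _ (Finset.mem_filter.mp he).2
    rwa [Finset.card_image_of_injective _ (M.orderEmbOfFin h).injective] at this

lemma induce_card {k r n m : ℕ} (G : ColGraph k r n) (M : Finset (Fin n))
    (h : M.card = m) (i : Fin k) :
    ((G.induce M h).E i).card = ((G.E i).filter (· ⊆ M)).card := by
  classical
  refine Finset.card_bij (fun e _ => e.image (M.orderEmbOfFin h)) ?_ ?_ ?_
  · intro e he
    simp only [induce, Finset.mem_filter, Finset.mem_univ, true_and] at he
    simp only [Finset.mem_filter]
    refine ⟨he, fun x hx => ?_⟩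
    simp only [Finset.mem_image] at hx
    obtain ⟨j, _, rfl⟩ := hx
    exact M.orderEmbOfFin_mem h j
  · intro e₁ h₁ e₂ h₂ hEq
    exact Finset.image_injective (M.orderEmbOfFin h).injective hEq
  · intro e' he'
    simp only [Finset.mem_filter] at he'
    have hinj : Set.InjOn (M.orderEmbOfFin h) ((M.orderEmbOfFin h) ⁻¹' ↑e') :=
      (M.orderEmbOfFin h).injective.injOn
    have himg : (e'.preimage (M.orderEmbOfFin h) hinj).image (M.orderEmbOfFin h) = e' := by
      rw [Finset.image_preimage]
      refine Finset.filter_true_of_mem fun x hx => ?_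
      rw [Finset.range_orderEmbOfFin]
      exact he'.2 hx
    refine ⟨e'.preimage (M.orderEmbOfFin h) hinj, ?_, himg⟩
    simp only [induce, Finset.mem_filter, Finset.mem_univ, true_and]
    rw [himg]; exact he'.1

lemma density_nonneg {k r n : ℕ} (G : ColGraph k r n) : 0 ≤ G.density := by
  unfold density
  positivity

lemma density_le {k r n : ℕ} (G : ColGraph k r n) (h : r ≤ n) : G.density ≤ k := by
  unfold density
  have hpos : (0 : ℝ) < (n.choose r : ℝ) := by
    exact_mod_cast Nat.choose_pos h
  rw [div_le_iff₀ hpos]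
  have hb : ∀ i : Fin k, ((G.E i).card : ℝ) ≤ (n.choose r : ℝ) := by
    intro i
    have : G.E i ⊆ Finset.powersetCard r (Finset.univ : Finset (Fin n)) := by
      intro e he
      rw [Finset.mem_powersetCard_univ]
      exact G.card_mem i e he
    have := Finset.card_le_card this
    rw [Finset.card_powersetCard, Finset.card_univ, Fintype.card_fin] at this
    exact_mod_cast this
  calc ∑ i : Fin k, ((G.E i).card : ℝ) ≤ ∑ _i : Fin k, (n.choose r : ℝ) :=
        Finset.sum_le_sum fun i _ => hb i
    _ = k * (n.choose r : ℝ) := by simp [mul_comm]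

/-- The "local density" of `G` on a vertex set `M`, normalized as if `M` had `m` vertices. -/
noncomputable def locDensity {k r n : ℕ} (G : ColGraph k r n) (m : ℕ)
    (M : Finset (Fin n)) : ℝ :=
  (∑ i : Fin k, (((G.E i).filter (· ⊆ M)).card : ℝ)) / (m.choose r : ℝ)

lemma locDensity_eq {k r n m : ℕ} (G : ColGraph k r n) (M : Finset (Fin n))
    (h : M.card = m) : G.locDensity m M = (G.induce M h).density := by
  unfold locDensity density
  congr 1
  refine Finset.sum_congr rfl fun i _ => ?_
  rw [induce_card]

lemma locDensity_nonneg {k r n : ℕ} (G : ColGraph k r n) (m : ℕ) (M : Finset (Fin n)) :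
    0 ≤ G.locDensity m M := by
  unfold locDensity; positivity

lemma sum_filter_card {k r n : ℕ} (G : ColGraph k r n) (m : ℕ) (hrm : r ≤ m)
    (i : Fin k) :
    ∑ M ∈ Finset.powersetCard m (Finset.univ : Finset (Fin n)),
        ((G.E i).filter (· ⊆ M)).card = (G.E i).card * (n - r).choose (m - r) := by
  classical
  calc ∑ M ∈ Finset.powersetCard m (Finset.univ : Finset (Fin n)),
        ((G.E i).filter (· ⊆ M)).card
      = ∑ M ∈ Finset.powersetCard m (Finset.univ : Finset (Fin n)),
          ∑ e ∈ G.E i, if e ⊆ M then 1 else 0 := by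
        refine Finset.sum_congr rfl fun M _ => ?_
        rw [Finset.card_filter]
    _ = ∑ e ∈ G.E i, ∑ M ∈ Finset.powersetCard m (Finset.univ : Finset (Fin n)),
          if e ⊆ M then 1 else 0 := Finset.sum_comm
    _ = ∑ e ∈ G.E i, (n - r).choose (m - r) := by
        refine Finset.sum_congr rfl fun e he => ?_
        rw [← Finset.card_filter]
        have hcard := G.card_mem i e he
        have := aux_card_supersets e m (by rw [hcard]; exact hrm)
        rw [hcard] at this
        exact this
    _ = (G.E i).card * (n - r).choose (m - r) := by
        rw [Finset.sum_const, smul_eq_mul]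

lemma sum_locDensity {k r n : ℕ} (G : ColGraph k r n) (m : ℕ) (hrm : r ≤ m)
    (hmn : m ≤ n) :
    ∑ M ∈ Finset.powersetCard m (Finset.univ : Finset (Fin n)), G.locDensity m M
      = G.density * (n.choose m : ℝ) := by
  have hrn : r ≤ n := hrm.trans hmn
  have hmr : (0:ℝ) < (m.choose r : ℝ) := by exact_mod_cast Nat.choose_pos hrm
  have hnr : (0:ℝ) < (n.choose r : ℝ) := by exact_mod_cast Nat.choose_pos hrn
  have hsum : ∀ i : Fin k, ∑ M ∈ Finset.powersetCard m (Finset.univ : Finset (Fin n)),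
      (((G.E i).filter (· ⊆ M)).card : ℝ) = ((G.E i).card : ℝ) * ((n - r).choose (m - r) : ℝ) := by
    intro i
    rw [← Nat.cast_sum]
    rw [sum_filter_card G m hrm i]
    push_cast
    ring
  have key : ∑ M ∈ Finset.powersetCard m (Finset.univ : Finset (Fin n)),
      ∑ i : Fin k, (((G.E i).filter (· ⊆ M)).card : ℝ)
      = (∑ i : Fin k, ((G.E i).card : ℝ)) * ((n - r).choose (m - r) : ℝ) := by
    rw [Finset.sum_comm]
    rw [Finset.sum_congr rfl fun i (_ : i ∈ (Finset.univ : Finset (Fin k))) => hsum i]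
    rw [← Finset.sum_mul]
  have hid : (n.choose m : ℝ) * (m.choose r : ℝ) = (n.choose r : ℝ) * ((n - r).choose (m - r) : ℝ) := by
    exact_mod_cast congrArg (Nat.cast : ℕ → ℝ) (Nat.choose_mul (n := n) hrm)
  unfold locDensity density
  rw [← Finset.sum_div, key]
  field_simp
  linear_combination -(∑ i : Fin k, ((G.E i).card : ℝ)) * hid

lemma locDensity_le {k r n : ℕ} (G : ColGraph k r n) (m : ℕ) (hrm : r ≤ m)
    (M : Finset (Fin n)) (hM : M.card = m) : G.locDensity m M ≤ k := by
  rw [locDensity_eq G M hM]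
  exact density_le _ hrm

lemma turanDensityN_nonneg {k r v : ℕ} (H : ColGraph k r v) (n : ℕ) :
    0 ≤ H.turanDensityN n := by
  refine Real.sSup_nonneg fun x hx => ?_
  obtain ⟨G, _, rfl⟩ := hx
  exact G.density_nonneg

lemma subgraph_of_lt_density {k r v m : ℕ} (H : ColGraph k r v) (G : ColGraph k r m)
    (hrm : r ≤ m) (hd : H.turanDensityN m < G.density) : H.IsSubgraph G := by
  by_contra hcon
  have hbdd : BddAbove {x : ℝ | ∃ G' : ColGraph k r m, ¬ H.IsSubgraph G' ∧ G'.density = x} := by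
    refine ⟨k, fun x hx => ?_⟩
    obtain ⟨G', _, rfl⟩ := hx
    exact G'.density_le hrm
  have : G.density ≤ H.turanDensityN m := le_csSup hbdd ⟨G, hcon, rfl⟩
  linarith

end ColGraph

end AuxSupersat

theorem colored_supersaturation {k r v : ℕ} (hr : 2 ≤ r) (hrk : r ≤ k)
    (H : ColGraph k r v) (pi : ℝ)
    (hconv : Filter.Tendsto H.turanDensityN Filter.atTop (nhds pi)) :
    ∀ a : ℝ, 0 < a → ∃ b : ℝ, 0 < b ∧ ∃ n₀ : ℕ, ∀ n : ℕ, n₀ < n →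
      ∀ G : ColGraph k r n, pi + a < G.density →
        b * (n.choose v : ℝ) ≤
          ({S : Finset (Fin n) | S.card = v ∧ ∃ f : Fin v → Fin n,
              Function.Injective f ∧ (∀ x, f x ∈ S) ∧
              ∀ i : Fin k, ∀ e ∈ H.E i, e.image f ∈ G.E i}.ncard : ℝ) := by
  classical
  intro a ha
  by_cases hka : (k : ℝ) ≤ pi + a
  · refine ⟨1, one_pos, r, fun n hn G hd => absurd hd (not_lt.mpr ?_)⟩
    exact (G.density_le hn.le).trans hka
  push_neg at hka
  -- choose m
  have hev : ∀ᶠ n in Filter.atTop, H.turanDensityN n < pi + a / 2 :=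
    hconv.eventually (gt_mem_nhds (by linarith))
  obtain ⟨N, hN⟩ := Filter.eventually_atTop.mp hev
  set m : ℕ := max (max N v) r with hm
  have hNm : N ≤ m := le_trans (le_max_left _ _) (le_max_left _ _)
  have hvm : v ≤ m := le_trans (le_max_right _ _) (le_max_left _ _)
  have hrm : r ≤ m := le_max_right _ _
  have hturan : H.turanDensityN m < pi + a / 2 := hN m hNm
  have hkpa : (0 : ℝ) < (k : ℝ) - (pi + a / 2) := by linarith
  set c : ℝ := (a / 2) / ((k : ℝ) - (pi + a / 2)) with hc
  have hcpos : 0 < c := div_pos (by linarith) hkpa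
  have hmv : (0 : ℝ) < (m.choose v : ℝ) := by exact_mod_cast Nat.choose_pos hvm
  refine ⟨c / (m.choose v : ℝ), div_pos hcpos hmv, m, fun n hn G hdG => ?_⟩
  have hmn : m ≤ n := hn.le
  have hvn : v ≤ n := hvm.trans hmn
  set T := Finset.powersetCard m (Finset.univ : Finset (Fin n)) with hT
  set A := T.filter (fun M => pi + a / 2 < G.locDensity m M) with hA
  have hMcard : ∀ M ∈ T, M.card = m := fun M hM => Finset.mem_powersetCard_univ.mp hM
  have hTcard : (T.card : ℝ) = (n.choose m : ℝ) := by
    rw [hT, Finset.card_powersetCard, Finset.card_univ, Fintype.card_fin]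
  have hTpos : (0 : ℝ) < (n.choose m : ℝ) := by exact_mod_cast Nat.choose_pos hmn
  -- averaging: many M with large local density
  have hcardle : A.card ≤ T.card := Finset.card_filter_le _ _
  have hsum_eq : ∑ M ∈ T, G.locDensity m M = G.density * (n.choose m : ℝ) :=
    ColGraph.sum_locDensity G m hrm hmn
  have hupA : ∑ M ∈ A, G.locDensity m M ≤ (A.card : ℝ) * k := by
    have := Finset.sum_le_card_nsmul A (fun M => G.locDensity m M) (k : ℝ)
      (fun M hM => ColGraph.locDensity_le G m hrm M
        (hMcard M (Finset.mem_filter.mp hM).1))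
    simpa [nsmul_eq_mul] using this
  have hupB : ∑ M ∈ T.filter (fun M => ¬ (pi + a / 2 < G.locDensity m M)),
      G.locDensity m M ≤ ((T.card : ℝ) - (A.card : ℝ)) * (pi + a / 2) := by
    have hc2 : (T.filter (fun M => ¬ (pi + a / 2 < G.locDensity m M))).card
        = T.card - A.card := by
      have h6 := Finset.card_filter_add_card_filter_not (s := T)
        (p := fun M => pi + a / 2 < G.locDensity m M)
      rw [← hA] at h6
      omega
    have h7 := Finset.sum_le_card_nsmul
      (T.filter (fun M => ¬ (pi + a / 2 < G.locDensity m M)))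
      (fun M => G.locDensity m M) (pi + a / 2)
      (fun M hM => not_lt.mp (Finset.mem_filter.mp hM).2)
    rw [hc2, nsmul_eq_mul, Nat.cast_sub hcardle] at h7
    exact h7
  have hsplit : ∑ M ∈ A, G.locDensity m M
      + ∑ M ∈ T.filter (fun M => ¬ (pi + a / 2 < G.locDensity m M)), G.locDensity m M
      = ∑ M ∈ T, G.locDensity m M := Finset.sum_filter_add_sum_filter_not T _ _
  have hAbig : c * (n.choose m : ℝ) ≤ (A.card : ℝ) := by
    have h1 : (pi + a) * (n.choose m : ℝ) < G.density * (n.choose m : ℝ) := by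
      exact mul_lt_mul_of_pos_right hdG hTpos
    have h2 : (a / 2) * (n.choose m : ℝ) ≤ (A.card : ℝ) * ((k : ℝ) - (pi + a / 2)) := by
      nlinarith [hupA, hupB, hsplit, hsum_eq, h1, hTcard]
    rw [hc, div_mul_eq_mul_div, div_le_iff₀ hkpa]
    linarith
  -- the good v-sets
  set Good := (Finset.powersetCard v (Finset.univ : Finset (Fin n))).filter
    (fun S => ∃ f : Fin v → Fin n, Function.Injective f ∧ (∀ x, f x ∈ S) ∧
      ∀ i : Fin k, ∀ e ∈ H.E i, e.image f ∈ G.E i) with hGood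
  have hsetGood : {S : Finset (Fin n) | S.card = v ∧ ∃ f : Fin v → Fin n,
      Function.Injective f ∧ (∀ x, f x ∈ S) ∧
      ∀ i : Fin k, ∀ e ∈ H.E i, e.image f ∈ G.E i} = (↑Good : Set (Finset (Fin n))) := by
    ext S
    simp only [Set.mem_setOf_eq, hGood, Finset.coe_filter, Finset.mem_powersetCard_univ]
  rw [hsetGood, Set.ncard_coe_finset]
  -- each M in A contains a good set
  have hex : ∀ M ∈ A, ∃ S, S ∈ Good ∧ S ⊆ M := by
    intro M hM
    obtain ⟨hMT, hMd⟩ := Finset.mem_filter.mp hM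
    have hMc : M.card = m := hMcard M hMT
    have hdm : H.turanDensityN m < (G.induce M hMc).density := by
      rw [← ColGraph.locDensity_eq G M hMc]; linarith
    obtain ⟨f₀, hf₀inj, hf₀e⟩ := ColGraph.subgraph_of_lt_density H _ hrm hdm
    set g : Fin v → Fin n := fun x => M.orderEmbOfFin hMc (f₀ x) with hg
    have hginj : Function.Injective g := fun x y hxy =>
      hf₀inj ((M.orderEmbOfFin hMc).injective hxy)
    refine ⟨Finset.univ.image g, ?_, ?_⟩
    · rw [hGood, Finset.mem_filter]
      refine ⟨Finset.mem_powersetCard_univ.mpr ?_,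
        g, hginj, fun x => Finset.mem_image_of_mem g (Finset.mem_univ x), fun i e he => ?_⟩
      · rw [Finset.card_image_of_injective _ hginj, Finset.card_univ, Fintype.card_fin]
      · have h3 := hf₀e i e he
        simp only [ColGraph.induce, Finset.mem_filter, Finset.mem_univ, true_and] at h3
        rwa [Finset.image_image] at h3
    · intro x hx
      obtain ⟨y, _, rfl⟩ := Finset.mem_image.mp hx
      exact M.orderEmbOfFin_mem hMc (f₀ y)
  -- counting argument
  set φ : Finset (Fin n) → Finset (Fin n) :=
    fun M => if h : ∃ S, S ∈ Good ∧ S ⊆ M then h.choose else ∅ with hφdef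
  have hφ : ∀ M ∈ A, φ M ∈ Good ∧ φ M ⊆ M := by
    intro M hM
    have h := hex M hM
    simp only [hφdef, dif_pos h]
    exact h.choose_spec
  have himg : A.image φ ⊆ Good := by
    intro S hS
    obtain ⟨M, hM, rfl⟩ := Finset.mem_image.mp hS
    exact (hφ M hM).1
  have hAle : A.card ≤ ((n - v).choose (m - v)) * Good.card := by
    have hbound : ∀ S ∈ A.image φ,
        (A.filter (fun M => φ M = S)).card ≤ (n - v).choose (m - v) := by
      intro S hS
      have hSG := himg hS
      have hScard : S.card = v :=
        Finset.mem_powersetCard_univ.mp (Finset.mem_filter.mp hSG).1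
      have hsub : A.filter (fun M => φ M = S) ⊆ T.filter (fun M => S ⊆ M) := by
        intro M hM
        obtain ⟨hMA, hMS⟩ := Finset.mem_filter.mp hM
        refine Finset.mem_filter.mpr ⟨(Finset.mem_filter.mp hMA).1, ?_⟩
        rw [← hMS]
        exact (hφ M hMA).2
      have := Finset.card_le_card hsub
      rwa [hT, aux_card_supersets S m (by rw [hScard]; exact hvm), hScard] at this
    have h4 := Finset.card_le_mul_card_image A ((n - v).choose (m - v)) hbound
    exact h4.trans (Nat.mul_le_mul_left _ (Finset.card_le_card himg))
  -- final arithmetic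
  have hGoodR : c * (n.choose m : ℝ) ≤ ((n - v).choose (m - v) : ℝ) * (Good.card : ℝ) := by
    refine hAbig.trans ?_
    exact_mod_cast hAle
  have hid : (n.choose m : ℝ) * (m.choose v : ℝ)
      = (n.choose v : ℝ) * ((n - v).choose (m - v) : ℝ) := by
    exact_mod_cast congrArg (Nat.cast : ℕ → ℝ) (Nat.choose_mul (n := n) hvm)
  have hnvmv : (0 : ℝ) < ((n - v).choose (m - v) : ℝ) := by
    have : m - v ≤ n - v := by omega
    exact_mod_cast Nat.choose_pos this
  rw [div_mul_eq_mul_div, div_le_iff₀ hmv]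
  have h5 : c * (n.choose v : ℝ) * ((n - v).choose (m - v) : ℝ)
      ≤ (Good.card : ℝ) * (m.choose v : ℝ) * ((n - v).choose (m - v) : ℝ) := by
    calc c * (n.choose v : ℝ) * ((n - v).choose (m - v) : ℝ)
        = c * ((n.choose m : ℝ) * (m.choose v : ℝ)) := by rw [hid]; ring
      _ = (c * (n.choose m : ℝ)) * (m.choose v : ℝ) := by ring
      _ ≤ (((n - v).choose (m - v) : ℝ) * (Good.card : ℝ)) * (m.choose v : ℝ) :=
          mul_le_mul_of_nonneg_right hGoodR hmv.le
      _ = (Good.card : ℝ) * (m.choose v : ℝ) * ((n - v).choose (m - v) : ℝ) := by ring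
  exact le_of_mul_le_mul_right h5 hnvmv
end

section
/- Let H be a k-colored r-graph (k ≥ r ≥ 2), let s ≥ 1, and let H(s) be the blow-up of H. If π_n(H) → c as n → ∞, then also π_n(H(s)) → c as n → ∞; that is, π(H(s)) = π(H). -/
open Finset Filter

namespace BTD

open ColGraph

variable {k r m n N : ℕ}

lemma E_subset_powersetCard (G : ColGraph k r n) (i : Fin k) :
    G.E i ⊆ powersetCard r (univ : Finset (Fin n)) := by
  intro e he
  exact mem_powersetCard.2 ⟨subset_univ _, G.card_mem i e he⟩

lemma card_E_le (G : ColGraph k r n) (i : Fin k) : (G.E i).card ≤ n.choose r := by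
  have := Finset.card_le_card (E_subset_powersetCard G i)
  simpa [card_powersetCard] using this

lemma density_nonneg (G : ColGraph k r n) : 0 ≤ G.density := by
  unfold ColGraph.density
  positivity

lemma density_le (G : ColGraph k r n) : G.density ≤ k := by
  unfold ColGraph.density
  rcases eq_or_ne (n.choose r) 0 with h | h
  · simp only [h, Nat.cast_zero, div_zero]
    positivity
  · rw [div_le_iff₀ (by positivity)]
    calc ∑ i : Fin k, ((G.E i).card : ℝ) ≤ ∑ _i : Fin k, (n.choose r : ℝ) := by
          apply Finset.sum_le_sum
          intro i _
          exact_mod_cast card_E_le G i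
      _ = k * n.choose r := by simp [mul_comm]

lemma turan_bddAbove (H : ColGraph k r m) (n : ℕ) :
    BddAbove {x : ℝ | ∃ G : ColGraph k r n, ¬ H.IsSubgraph G ∧ G.density = x} := by
  refine ⟨k, ?_⟩
  rintro x ⟨G, -, rfl⟩
  exact density_le G

lemma turan_nonneg (H : ColGraph k r m) (n : ℕ) : 0 ≤ H.turanDensityN n := by
  unfold ColGraph.turanDensityN
  rcases Set.eq_empty_or_nonempty {x : ℝ | ∃ G : ColGraph k r n, ¬ H.IsSubgraph G ∧ G.density = x} with h | h
  · rw [h, Real.sSup_empty]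
  · obtain ⟨x, G, hG, rfl⟩ := h
    exact le_trans (density_nonneg G) (le_csSup (turan_bddAbove H n) ⟨G, hG, rfl⟩)

lemma turan_le (H : ColGraph k r m) (n : ℕ) : H.turanDensityN n ≤ k := by
  apply Real.sSup_le
  · rintro x ⟨G, -, rfl⟩
    exact density_le G
  · positivity

lemma density_le_turan {H : ColGraph k r m} {G : ColGraph k r n} (h : ¬ H.IsSubgraph G) :
    G.density ≤ H.turanDensityN n :=
  le_csSup (turan_bddAbove H n) ⟨G, h, rfl⟩

lemma isSubgraph_trans {p : ℕ} {H : ColGraph k r m} {K : ColGraph k r p} {G : ColGraph k r n}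
    (h1 : H.IsSubgraph K) (h2 : K.IsSubgraph G) : H.IsSubgraph G := by
  obtain ⟨f, hf, hfe⟩ := h1
  obtain ⟨g, hg, hge⟩ := h2
  refine ⟨g ∘ f, hg.comp hf, fun i e he => ?_⟩
  rw [← Finset.image_image]
  exact hge i _ (hfe i e he)

lemma subgraph_blowUp (H : ColGraph k r m) {s : ℕ} (hs : 1 ≤ s) :
    H.IsSubgraph (H.blowUp s) := by
  refine ⟨fun u => finProdFinEquiv (u, ⟨0, hs⟩), ?_, ?_⟩
  · intro a b hab
    have := finProdFinEquiv.injective hab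
    exact congrArg Prod.fst this
  · intro i e he
    unfold ColGraph.blowUp
    simp only [Finset.mem_filter, Finset.mem_univ, true_and]
    constructor
    · rw [Finset.card_image_of_injective _ (fun a b hab => congrArg Prod.fst (finProdFinEquiv.injective hab))]
      exact H.card_mem i e he
    · rw [Finset.image_image]
      have : e.image ((fun x => (finProdFinEquiv.symm x).1) ∘ fun u => finProdFinEquiv (u, ⟨0, hs⟩))
          = e.image id := Finset.image_congr (fun u _ => by simp only [Function.comp_apply, Equiv.symm_apply_apply, id_eq])
      rw [this, Finset.image_id]
      exact he

lemma turan_mono_blowUp (H : ColGraph k r m) {s : ℕ} (hs : 1 ≤ s) (n : ℕ) :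
    H.turanDensityN n ≤ (H.blowUp s).turanDensityN n := by
  unfold ColGraph.turanDensityN
  rcases Set.eq_empty_or_nonempty {x : ℝ | ∃ G : ColGraph k r n, ¬ H.IsSubgraph G ∧ G.density = x} with h | h
  · rw [h, Real.sSup_empty]
    exact turan_nonneg _ n
  · apply csSup_le_csSup (turan_bddAbove _ n) h
    rintro x ⟨G, hG, rfl⟩
    exact ⟨G, fun hc => hG (isSubgraph_trans (subgraph_blowUp H hs) hc), rfl⟩

end BTD
namespace BTD

variable {k r m n N : ℕ}

lemma card_supersets (A : Finset (Fin n)) (hA : A.card ≤ N) :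
    (((univ : Finset (Fin n)).powersetCard N).filter (fun S => A ⊆ S)).card
      = (n - A.card).choose (N - A.card) := by
  classical
  have : (((univ : Finset (Fin n)).powersetCard N).filter (fun S => A ⊆ S)).card
      = (Aᶜ.powersetCard (N - A.card)).card := by
    apply Finset.card_nbij' (fun S => S \ A) (fun T => T ∪ A)
    · intro S hS
      rw [Finset.mem_coe, Finset.mem_filter, Finset.mem_powersetCard] at hS
      obtain ⟨⟨-, hcard⟩, hAS⟩ := hS
      rw [Finset.mem_coe, Finset.mem_powersetCard]
      constructor
      · intro x hx
        rw [Finset.mem_sdiff] at hx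
        simp [hx.2]
      · rw [Finset.card_sdiff_of_subset hAS, hcard]
    · intro T hT
      rw [Finset.mem_coe, Finset.mem_powersetCard] at hT
      obtain ⟨hTc, hTcard⟩ := hT
      have hdisj : Disjoint T A := by
        rw [Finset.disjoint_left]
        intro x hx hxA
        have := hTc hx
        simp [hxA] at this
      rw [Finset.mem_coe, Finset.mem_filter, Finset.mem_powersetCard]
      refine ⟨⟨Finset.subset_univ _, ?_⟩, Finset.subset_union_right⟩
      rw [Finset.card_union_of_disjoint hdisj, hTcard]
      omega
    · intro S hS
      rw [Finset.mem_coe, Finset.mem_filter] at hS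
      exact Finset.sdiff_union_of_subset hS.2
    · intro T hT
      rw [Finset.mem_coe, Finset.mem_powersetCard] at hT
      apply Finset.union_sdiff_cancel_right
      rw [Finset.disjoint_left]
      intro x hx hxA
      have := hT.1 hx
      simp [hxA] at this
  rw [this, Finset.card_powersetCard, Finset.card_compl, Fintype.card_fin]

lemma sum_count_eq (E : Finset (Finset (Fin n))) (hE : ∀ e ∈ E, e.card = r) (hrN : r ≤ N) :
    ∑ S ∈ (univ : Finset (Fin n)).powersetCard N, (E.filter (fun e => e ⊆ S)).card
      = E.card * (n - r).choose (N - r) := by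
  classical
  have : ∀ S, (E.filter (fun e => e ⊆ S)).card = ∑ e ∈ E, if e ⊆ S then 1 else 0 := by
    intro S
    rw [Finset.card_filter]
  simp_rw [this]
  rw [Finset.sum_comm]
  have : ∀ e ∈ E, (∑ S ∈ (univ : Finset (Fin n)).powersetCard N, if e ⊆ S then 1 else 0)
      = (n - r).choose (N - r) := by
    intro e he
    rw [← Finset.card_filter]
    rw [card_supersets e (by rw [hE e he]; exact hrN), hE e he]
  rw [Finset.sum_congr rfl this, Finset.sum_const, smul_eq_mul]

end BTD
namespace BTD

open scoped Classical

variable {k r m n N : ℕ}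

noncomputable def cnt (G : ColGraph k r n) (S : Finset (Fin n)) : ℕ :=
  ∑ i : Fin k, ((G.E i).filter (fun e => e ⊆ S)).card

noncomputable def indDens (G : ColGraph k r n) (N : ℕ) (S : Finset (Fin n)) : ℝ :=
  (cnt G S : ℝ) / (N.choose r : ℝ)

lemma indDens_nonneg (G : ColGraph k r n) (S : Finset (Fin n)) : 0 ≤ indDens G N S := by
  unfold indDens; positivity

lemma indDens_le {G : ColGraph k r n} {S : Finset (Fin n)} (hS : S.card = N) :
    indDens G N S ≤ k := by
  unfold indDens
  rcases eq_or_ne (N.choose r) 0 with h | h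
  · simp only [h, Nat.cast_zero, div_zero]
    positivity
  · rw [div_le_iff₀ (by positivity)]
    have hb : ∀ i : Fin k, ((G.E i).filter (fun e => e ⊆ S)).card ≤ N.choose r := by
      intro i
      have hsub : (G.E i).filter (fun e => e ⊆ S) ⊆ S.powersetCard r := by
        intro e he
        rw [Finset.mem_filter] at he
        exact Finset.mem_powersetCard.2 ⟨he.2, G.card_mem i e he.1⟩
      simpa [Finset.card_powersetCard, hS] using Finset.card_le_card hsub
    calc (cnt G S : ℝ) ≤ ∑ _i : Fin k, (N.choose r : ℝ) := by
          unfold cnt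
          push_cast
          exact Finset.sum_le_sum (fun i _ => by exact_mod_cast hb i)
      _ = k * N.choose r := by simp [mul_comm]

lemma sum_indDens (G : ColGraph k r n) (hrN : r ≤ N) (hNn : N ≤ n) :
    ∑ S ∈ (univ : Finset (Fin n)).powersetCard N, indDens G N S
      = G.density * (n.choose N) := by
  have hsum : ∑ S ∈ (univ : Finset (Fin n)).powersetCard N, cnt G S
      = (∑ i : Fin k, (G.E i).card) * ((n - r).choose (N - r)) := by
    unfold cnt
    rw [Finset.sum_comm, Finset.sum_mul]
    exact Finset.sum_congr rfl (fun i _ => sum_count_eq (G.E i) (G.card_mem i) hrN)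
  unfold indDens ColGraph.density
  rw [← Finset.sum_div]
  have hsum' : ∑ S ∈ (univ : Finset (Fin n)).powersetCard N, (cnt G S : ℝ)
      = (∑ i : Fin k, ((G.E i).card : ℝ)) * ((n - r).choose (N - r)) := by
    exact_mod_cast congrArg (Nat.cast : ℕ → ℝ) hsum
  rw [hsum']
  have h1 : (0:ℝ) < (N.choose r : ℝ) := by exact_mod_cast Nat.choose_pos hrN
  have h2 : (0:ℝ) < (n.choose r : ℝ) := by exact_mod_cast Nat.choose_pos (hrN.trans hNn)
  have hid : ((n - r).choose (N - r) : ℝ) * (n.choose r) = (n.choose N) * (N.choose r) := by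
    have hidN : (n - r).choose (N - r) * n.choose r = n.choose N * N.choose r := by
      rw [mul_comm]; exact (Nat.choose_mul (n := n) hrN).symm
    exact_mod_cast congrArg (Nat.cast : ℕ → ℝ) hidN
  rw [mul_div_assoc, div_mul_eq_mul_div, mul_div_assoc]
  congr 1
  rw [div_eq_div_iff h1.ne' h2.ne']
  linarith [hid]

end BTD
namespace BTD

open scoped Classical

variable {k r m n N : ℕ}

/-- the order embedding of `Fin N` onto a set `S` of size `N`, as a plain map. -/
noncomputable def emb {S : Finset (Fin n)} (hS : S.card = N) : Fin N → Fin n :=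
  fun a => (S.orderIsoOfFin hS a : Fin n)

lemma emb_injective {S : Finset (Fin n)} (hS : S.card = N) : Function.Injective (emb hS) := by
  intro a b hab
  exact (S.orderIsoOfFin hS).injective (Subtype.ext hab)

lemma emb_mem {S : Finset (Fin n)} (hS : S.card = N) (a : Fin N) : emb hS a ∈ S :=
  (S.orderIsoOfFin hS a).2

lemma image_emb_univ {S : Finset (Fin n)} (hS : S.card = N) :
    (univ : Finset (Fin N)).image (emb hS) = S := by
  apply Finset.eq_of_subset_of_card_le
  · intro x hx
    rw [Finset.mem_image] at hx
    obtain ⟨a, -, rfl⟩ := hx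
    exact emb_mem hS a
  · rw [Finset.card_image_of_injective _ (emb_injective hS), hS, Finset.card_univ, Fintype.card_fin]

noncomputable def induced (G : ColGraph k r n) {S : Finset (Fin n)} (hS : S.card = N) :
    ColGraph k r N where
  E i := (univ : Finset (Finset (Fin N))).filter (fun e => e.image (emb hS) ∈ G.E i)
  card_mem i e he := by
    rw [Finset.mem_filter] at he
    have := G.card_mem i _ he.2
    rwa [Finset.card_image_of_injective _ (emb_injective hS)] at this

lemma induced_card (G : ColGraph k r n) {S : Finset (Fin n)} (hS : S.card = N) (i : Fin k) :
    ((induced G hS).E i).card = ((G.E i).filter (fun e => e ⊆ S)).card := by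
  apply Finset.card_nbij (fun e => e.image (emb hS))
  · intro e he
    unfold induced at he
    simp only [Finset.mem_coe, Finset.mem_filter, Finset.mem_univ, true_and] at he
    simp only [Finset.mem_coe, Finset.mem_filter]
    refine ⟨he, ?_⟩
    intro x hx
    rw [Finset.mem_image] at hx
    obtain ⟨a, -, rfl⟩ := hx
    exact emb_mem hS a
  · intro e1 h1 e2 h2 h
    exact Finset.image_injective (emb_injective hS) h
  · intro e' he'
    simp only [Finset.mem_coe, Finset.mem_filter] at he'
    have : e' ⊆ (univ : Finset (Fin N)).image (emb hS) := by
      rw [image_emb_univ hS]; exact he'.2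
    obtain ⟨e, -, rfl⟩ := Finset.subset_image_iff.mp this
    refine Set.mem_image_of_mem _ ?_
    unfold induced
    simp only [Finset.mem_coe, Finset.mem_filter, Finset.mem_univ, true_and]
    exact he'.1

lemma induced_density (G : ColGraph k r n) {S : Finset (Fin n)} (hS : S.card = N) :
    (induced G hS).density = indDens G N S := by
  unfold ColGraph.density indDens cnt
  congr 1
  push_cast
  exact Finset.sum_congr rfl (fun i _ => by rw [induced_card G hS i])

/-- the finset of embeddings of `H` into `G`. -/
noncomputable def Embs (H : ColGraph k r m) (G : ColGraph k r n) : Finset (Fin m → Fin n) :=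
  (univ : Finset (Fin m → Fin n)).filter
    (fun f => Function.Injective f ∧ ∀ i : Fin k, ∀ e ∈ H.E i, e.image f ∈ G.E i)

lemma mem_Embs {H : ColGraph k r m} {G : ColGraph k r n} {f : Fin m → Fin n} :
    f ∈ Embs H G ↔ Function.Injective f ∧ ∀ i : Fin k, ∀ e ∈ H.E i, e.image f ∈ G.E i := by
  unfold Embs
  simp

lemma subgraph_of_induced {H : ColGraph k r m} {G : ColGraph k r n} {S : Finset (Fin n)}
    (hS : S.card = N) (h : H.IsSubgraph (induced G hS)) :
    ∃ f ∈ Embs H G, (univ : Finset (Fin m)).image f ⊆ S := by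
  obtain ⟨f₀, hinj, hedge⟩ := h
  refine ⟨emb hS ∘ f₀, ?_, ?_⟩
  · rw [mem_Embs]
    refine ⟨(emb_injective hS).comp hinj, fun i e he => ?_⟩
    rw [← Finset.image_image]
    have := hedge i e he
    unfold induced at this
    rw [Finset.mem_filter] at this
    exact this.2
  · intro x hx
    rw [Finset.mem_image] at hx
    obtain ⟨a, -, rfl⟩ := hx
    exact emb_mem hS (f₀ a)

lemma supersat {H : ColGraph k r m} {G : ColGraph k r n} {c δ : ℝ}
    (hrN : r ≤ N) (hmN : m ≤ N) (hNn : N ≤ n) (hδ : 0 < δ) (hc : 0 ≤ c) (hk : 1 ≤ k)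
    (hπ : H.turanDensityN N ≤ c + δ/2) (hG : c + δ ≤ G.density) :
    δ/(2*k) * (n.choose N) ≤ ((Embs H G).card : ℝ) * ((n - m).choose (N - m)) := by
  set P := (univ : Finset (Fin n)).powersetCard N with hP
  set T := P.filter (fun S => c + δ/2 < indDens G N S) with hT
  have hcards : ∀ S ∈ P, S.card = N := by
    intro S hS
    exact (Finset.mem_powersetCard.1 hS).2
  -- lower bound on |T|
  have havg : (c + δ) * (n.choose N) ≤ ∑ S ∈ P, indDens G N S := by
    rw [sum_indDens G hrN hNn]
    apply mul_le_mul_of_nonneg_right hG (by positivity)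
  have hsplit : ∑ S ∈ P, indDens G N S ≤ (T.card : ℝ) * k + (c + δ/2) * (n.choose N) := by
    rw [← Finset.sum_filter_add_sum_filter_not P (fun S => c + δ/2 < indDens G N S)]
    gcongr
    · calc ∑ S ∈ T, indDens G N S ≤ ∑ S ∈ T, (k:ℝ) := by
            apply Finset.sum_le_sum
            intro S hS
            exact indDens_le (hcards S (Finset.mem_filter.1 hS).1)
        _ = (T.card : ℝ) * k := by rw [Finset.sum_const, nsmul_eq_mul]
    · calc ∑ S ∈ P.filter (fun S => ¬ (c + δ/2 < indDens G N S)), indDens G N S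
          ≤ ∑ _S ∈ P.filter (fun S => ¬ (c + δ/2 < indDens G N S)), (c + δ/2) := by
            apply Finset.sum_le_sum
            intro S hS
            exact le_of_not_gt (Finset.mem_filter.1 hS).2
        _ ≤ (c + δ/2) * (n.choose N) := by
            rw [Finset.sum_const, nsmul_eq_mul, mul_comm]
            apply mul_le_mul_of_nonneg_left _ (by positivity)
            have := Finset.card_le_card (Finset.filter_subset (fun S => ¬ (c + δ/2 < indDens G N S)) P)
            rw [hP, Finset.card_powersetCard, Finset.card_univ, Fintype.card_fin] at this
            exact_mod_cast this
  have hTcard : δ/2 * (n.choose N) ≤ (T.card : ℝ) * k := by nlinarith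
  -- every S in T yields an embedding with range in S
  have hembT : ∀ S ∈ T, ∃ f ∈ Embs H G, (univ : Finset (Fin m)).image f ⊆ S := by
    intro S hS
    rw [hT, Finset.mem_filter] at hS
    obtain ⟨hSP, hSd⟩ := hS
    have hSc : S.card = N := hcards S hSP
    by_contra hcon
    push_neg at hcon
    have hfree : ¬ H.IsSubgraph (induced G hSc) := by
      intro hsub
      obtain ⟨f, hf1, hf2⟩ := subgraph_of_induced hSc hsub
      exact hcon f hf1 hf2
    have := density_le_turan hfree
    rw [induced_density G hSc] at this
    linarith
  -- double counting
  have hTle : (T.card : ℝ) ≤ ((Embs H G).card : ℝ) * ((n - m).choose (N - m)) := by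
    have hsub : T ⊆ (Embs H G).biUnion
        (fun f => P.filter (fun S => (univ : Finset (Fin m)).image f ⊆ S)) := by
      intro S hS
      obtain ⟨f, hf, hfS⟩ := hembT S hS
      rw [Finset.mem_biUnion]
      exact ⟨f, hf, Finset.mem_filter.2 ⟨(Finset.mem_filter.1 hS).1, hfS⟩⟩
    have h1 : T.card ≤ ∑ f ∈ Embs H G,
        (P.filter (fun S => (univ : Finset (Fin m)).image f ⊆ S)).card :=
      le_trans (Finset.card_le_card hsub) (Finset.card_biUnion_le)
    have h2 : ∀ f ∈ Embs H G,
        (P.filter (fun S => (univ : Finset (Fin m)).image f ⊆ S)).card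
          = (n - m).choose (N - m) := by
      intro f hf
      have hinj : Function.Injective f := (mem_Embs.1 hf).1
      have hcard : ((univ : Finset (Fin m)).image f).card = m := by
        rw [Finset.card_image_of_injective _ hinj, Finset.card_univ, Fintype.card_fin]
      have := card_supersets ((univ : Finset (Fin m)).image f) (le_trans (le_of_eq hcard) hmN)
      rw [hcard] at this
      exact this
    rw [Finset.sum_congr rfl h2, Finset.sum_const, smul_eq_mul] at h1
    exact_mod_cast h1
  have hkpos : (0:ℝ) < k := by exact_mod_cast hk
  calc δ/(2*k) * (n.choose N) = (δ/2 * (n.choose N)) / k := by ring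
    _ ≤ (T.card : ℝ) := by rw [div_le_iff₀ hkpos]; linarith
    _ ≤ _ := hTle

end BTD
namespace BTD

open scoped Classical

lemma key_sum {m n : ℕ} (T : Finset (Fin (m+1) → Fin n)) :
    ∑ f : Fin m → Fin n, ((univ : Finset (Fin n)).filter (fun u => Fin.snoc f u ∈ T)).card
      = T.card := by
  have h1 : ∑ f : Fin m → Fin n,
      ((univ : Finset (Fin n)).filter (fun u => Fin.snoc f u ∈ T)).card
      = ((univ : Finset ((Fin m → Fin n) × Fin n)).filter
          (fun p => Fin.snoc p.1 p.2 ∈ T)).card := by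
    rw [Finset.card_filter]
    rw [Fintype.sum_prod_type]
    exact Finset.sum_congr rfl (fun f _ => (Finset.card_filter _ _))
  rw [h1]
  apply Finset.card_nbij'
    (i := fun p : (Fin m → Fin n) × Fin n => (Fin.snoc p.1 p.2 : Fin (m+1) → Fin n))
    (j := fun h : Fin (m+1) → Fin n => ((Fin.init h : Fin m → Fin n), h (Fin.last m)))
  · intro p hp
    rw [Finset.mem_coe, Finset.mem_filter] at hp
    exact hp.2
  · intro h hh
    rw [Finset.mem_coe, Finset.mem_filter]
    refine ⟨Finset.mem_univ _, ?_⟩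
    rw [Fin.snoc_init_self]
    exact hh
  · intro p hp
    ext <;> simp [Fin.init_snoc, Fin.snoc_last]
  · intro h hh
    exact Fin.snoc_init_self h

lemma grid_lemma (s : ℕ) (hs : 1 ≤ s) :
    ∀ m : ℕ, ∀ δ : ℝ, 0 < δ → ∀ᶠ n : ℕ in atTop,
      ∀ T : Finset (Fin m → Fin n), δ * (n:ℝ)^m ≤ (T.card : ℝ) →
        ∃ W : Fin m → Finset (Fin n), (∀ j, (W j).card = s) ∧
          ∀ g : Fin m → Fin n, (∀ j, g j ∈ W j) → g ∈ T := by
  intro m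
  induction m with
  | zero =>
    intro δ hδ
    filter_upwards [eventually_ge_atTop 1] with n hn T hT
    have hpos : 0 < T.card := by
      have : (0:ℝ) < (T.card : ℝ) := lt_of_lt_of_le (by simpa using hδ) hT
      exact_mod_cast this
    obtain ⟨g₀, hg₀⟩ := Finset.card_pos.1 hpos
    refine ⟨fun j => j.elim0, fun j => j.elim0, fun g hg => ?_⟩
    have : g = g₀ := funext (fun j => j.elim0)
    rw [this]
    exact hg₀
  | succ m ih =>
    intro δ hδ
    have hδ' : (0:ℝ) < δ/2 * ((δ/4)^s / (s.factorial : ℝ)) := by positivity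
    have hev1 : ∀ᶠ n : ℕ in atTop, (s:ℝ) ≤ δ/4 * (n:ℝ) := by
      have ht : Tendsto (fun n : ℕ => δ/4 * (n:ℝ)) atTop atTop :=
        (tendsto_natCast_atTop_atTop (R := ℝ)).const_mul_atTop (by positivity)
      exact ht.eventually_ge_atTop _
    filter_upwards [ih _ hδ', hev1, eventually_ge_atTop s, eventually_ge_atTop 1]
      with n hIH hsn hns hn1 T hT
    set δ' := δ/2 * ((δ/4)^s / (s.factorial : ℝ)) with hδ'def
    set D : (Fin m → Fin n) → Finset (Fin n) :=
      fun f => (univ : Finset (Fin n)).filter (fun u => Fin.snoc f u ∈ T) with hD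
    set d₀ : ℕ := ⌈δ/2 * (n:ℝ)⌉₊ with hd₀
    set B : Finset (Fin m → Fin n) :=
      (univ : Finset (Fin m → Fin n)).filter (fun f => δ/2 * (n:ℝ) ≤ ((D f).card : ℝ)) with hB
    have hnR : (1:ℝ) ≤ (n:ℝ) := by exact_mod_cast hn1
    -- lower bound on B
    have hkey : ∑ f : Fin m → Fin n, ((D f).card : ℝ) = (T.card : ℝ) := by
      exact_mod_cast congrArg (Nat.cast : ℕ → ℝ) (key_sum T)
    have hcardfun : ((univ : Finset (Fin m → Fin n)).card : ℝ) = (n:ℝ)^m := by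
      rw [Finset.card_univ, Fintype.card_fun, Fintype.card_fin, Fintype.card_fin]
      push_cast
      ring
    have hBbound : δ/2 * (n:ℝ)^m ≤ (B.card : ℝ) := by
      have hsplit : (T.card : ℝ) ≤ (B.card : ℝ) * n + (n:ℝ)^m * (δ/2 * n) := by
        rw [← hkey, ← Finset.sum_filter_add_sum_filter_not
          (univ : Finset (Fin m → Fin n)) (fun f => δ/2 * (n:ℝ) ≤ ((D f).card : ℝ))]
        have e1 : ∑ f ∈ B, ((D f).card : ℝ) ≤ (B.card : ℝ) * n := by
          rw [← nsmul_eq_mul, ← Finset.sum_const]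
          apply Finset.sum_le_sum
          intro f _
          have : (D f).card ≤ n := by
            calc (D f).card ≤ (univ : Finset (Fin n)).card := Finset.card_filter_le _ _
              _ = n := by rw [Finset.card_univ, Fintype.card_fin]
          exact_mod_cast this
        have e2 : ∑ f ∈ (univ : Finset (Fin m → Fin n)).filter
            (fun f => ¬ (δ/2 * (n:ℝ) ≤ ((D f).card : ℝ))), ((D f).card : ℝ)
            ≤ (n:ℝ)^m * (δ/2 * n) := by
          calc _ ≤ ∑ _f ∈ (univ : Finset (Fin m → Fin n)).filter
                (fun f => ¬ (δ/2 * (n:ℝ) ≤ ((D f).card : ℝ))), (δ/2 * (n:ℝ)) := by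
                apply Finset.sum_le_sum
                intro f hf
                rw [Finset.mem_filter] at hf
                exact le_of_not_ge hf.2
            _ ≤ (n:ℝ)^m * (δ/2 * n) := by
                rw [Finset.sum_const, nsmul_eq_mul]
                apply mul_le_mul_of_nonneg_right _ (by positivity)
                rw [← hcardfun]
                exact_mod_cast Finset.card_le_card (Finset.filter_subset _ _)
        exact add_le_add e1 e2
      have hT' : δ * ((n:ℝ)^m * n) ≤ (T.card : ℝ) := by
        rw [← pow_succ]
        exact hT
      have hmul : (δ/2 * (n:ℝ)^m) * n ≤ (B.card : ℝ) * n := by nlinarith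
      exact le_of_mul_le_mul_right hmul (lt_of_lt_of_le one_pos hnR)
    -- double counting over s-subsets
    set Ps := (univ : Finset (Fin n)).powersetCard s with hPs
    set TU : Finset (Fin n) → Finset (Fin m → Fin n) :=
      fun U => B.filter (fun f => U ⊆ D f) with hTU
    have hsum2 : ∑ U ∈ Ps, (TU U).card = ∑ f ∈ B, (D f).card.choose s := by
      have h1 : ∀ U, (TU U).card = ∑ f ∈ B, if U ⊆ D f then 1 else 0 :=
        fun U => Finset.card_filter _ _
      simp_rw [h1]
      rw [Finset.sum_comm]
      apply Finset.sum_congr rfl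
      intro f _
      rw [← Finset.card_filter]
      have hps : Ps.filter (fun U => U ⊆ D f) = (D f).powersetCard s := by
        ext U
        simp only [hPs, Finset.mem_filter, Finset.mem_powersetCard]
        constructor
        · rintro ⟨⟨-, h2⟩, h3⟩; exact ⟨h3, h2⟩
        · rintro ⟨h3, h2⟩; exact ⟨⟨Finset.subset_univ _, h2⟩, h3⟩
      rw [hps, Finset.card_powersetCard]
    have hlow : B.card * d₀.choose s ≤ ∑ U ∈ Ps, (TU U).card := by
      rw [hsum2]
      calc B.card * d₀.choose s = ∑ _f ∈ B, d₀.choose s := by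
            rw [Finset.sum_const, smul_eq_mul, mul_comm]
        _ ≤ ∑ f ∈ B, (D f).card.choose s := by
            apply Finset.sum_le_sum
            intro f hf
            apply Nat.choose_le_choose
            rw [hB, Finset.mem_filter] at hf
            exact Nat.ceil_le.2 hf.2
    have hPsne : Ps.Nonempty := by
      rw [hPs, ← Finset.card_pos, Finset.card_powersetCard, Finset.card_univ, Fintype.card_fin]
      exact Nat.choose_pos hns
    obtain ⟨U, hU, hUle⟩ := Finset.exists_le_of_sum_le (f := fun _ => B.card * d₀.choose s)
      (g := fun U => (n.choose s) * (TU U).card) hPsne (by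
        rw [Finset.sum_const, smul_eq_mul, ← Finset.mul_sum]
        have hPscard : Ps.card = n.choose s := by
          rw [hPs, Finset.card_powersetCard, Finset.card_univ, Fintype.card_fin]
        rw [hPscard]
        exact Nat.mul_le_mul_left _ hlow)
    have hd₀low : (δ/4 * (n:ℝ))^s / (s.factorial : ℝ) ≤ (d₀.choose s : ℝ) := by
      have hceil : δ/2 * (n:ℝ) ≤ (d₀ : ℝ) := Nat.le_ceil _
      have h4 : δ/4 * (n:ℝ) ≤ δ/2 * (n:ℝ) := by nlinarith
      have hsd : (s:ℝ) ≤ (d₀:ℝ) := le_trans hsn (le_trans h4 hceil)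
      have hsd' : s ≤ d₀ + 1 := by
        have : s ≤ d₀ := by exact_mod_cast hsd
        omega
      have hcast : ((d₀ + 1 - s : ℕ) : ℝ) = (d₀ : ℝ) + 1 - s := by
        rw [Nat.cast_sub hsd']
        push_cast
        ring
      have hbase : δ/4 * (n:ℝ) ≤ ((d₀ + 1 - s : ℕ) : ℝ) := by
        rw [hcast]
        linarith
      have hpow : (δ/4 * (n:ℝ))^s ≤ ((d₀ + 1 - s : ℕ) : ℝ)^s :=
        pow_le_pow_left₀ (by positivity) hbase s
      have hfact : (0:ℝ) < (s.factorial : ℝ) := by exact_mod_cast s.factorial_pos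
      calc (δ/4 * (n:ℝ))^s / (s.factorial : ℝ)
          ≤ ((d₀ + 1 - s : ℕ) : ℝ)^s / (s.factorial : ℝ) := by gcongr
        _ ≤ (d₀.choose s : ℝ) := by
            have h := Nat.pow_le_choose (α := ℝ) s d₀
            push_cast at h ⊢
            exact h
    have hTUlow : δ' * (n:ℝ)^m ≤ ((TU U).card : ℝ) := by
      have hnc : (0:ℝ) < (n.choose s : ℝ) := by exact_mod_cast Nat.choose_pos hns
      have hUle' : (B.card : ℝ) * (d₀.choose s : ℝ)
          ≤ (n.choose s : ℝ) * ((TU U).card : ℝ) := by exact_mod_cast hUle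
      have hCn : (n.choose s : ℝ) ≤ (n:ℝ)^s := by exact_mod_cast Nat.choose_le_pow n s
      have hchain : (δ' * (n:ℝ)^m) * (n.choose s : ℝ)
          ≤ ((TU U).card : ℝ) * (n.choose s : ℝ) := by
        calc (δ' * (n:ℝ)^m) * (n.choose s : ℝ) ≤ (δ' * (n:ℝ)^m) * (n:ℝ)^s := by
              apply mul_le_mul_of_nonneg_left hCn (mul_nonneg hδ'.le (by positivity))
          _ = (δ/2 * (n:ℝ)^m) * ((δ/4 * n)^s / (s.factorial : ℝ)) := by
              rw [hδ'def, mul_pow]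
              ring
          _ ≤ (B.card : ℝ) * (d₀.choose s : ℝ) :=
              mul_le_mul hBbound hd₀low (by positivity) (by positivity)
          _ ≤ (n.choose s : ℝ) * ((TU U).card : ℝ) := hUle'
          _ = ((TU U).card : ℝ) * (n.choose s : ℝ) := mul_comm _ _
      exact le_of_mul_le_mul_right hchain hnc
    obtain ⟨W, hW1, hW2⟩ := hIH (TU U) hTUlow
    have hUcard : U.card = s := by
      rw [hPs] at hU
      exact (Finset.mem_powersetCard.1 hU).2
    refine ⟨Fin.snoc W U, ?_, ?_⟩
    · intro j
      refine Fin.lastCases ?_ (fun j' => ?_) j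
      · rw [Fin.snoc_last]
        exact hUcard
      · rw [Fin.snoc_castSucc]
        exact hW1 j'
    · intro g hg
      have hf : ∀ j, Fin.init g j ∈ W j := by
        intro j
        have h := hg (Fin.castSucc j)
        rwa [Fin.snoc_castSucc] at h
      have hfT : Fin.init g ∈ TU U := hW2 _ hf
      rw [hTU] at hfT
      simp only [Finset.mem_filter] at hfT
      have hu : g (Fin.last m) ∈ U := by
        have h := hg (Fin.last m)
        rwa [Fin.snoc_last] at h
      have hgT : g (Fin.last m) ∈ D (Fin.init g) := hfT.2 hu
      simp only [hD, Finset.mem_filter] at hgT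
      have h2 := hgT.2
      rwa [Fin.snoc_init_self] at h2

end BTD
namespace BTD

open scoped Classical

variable {k r m n s : ℕ}

lemma blowup_of_grid {H : ColGraph k r m} {G : ColGraph k r n} (hs : 1 ≤ s)
    (W : Fin m → Finset (Fin n)) (hW1 : ∀ j, (W j).card = s)
    (hW2 : ∀ g : Fin m → Fin n, (∀ j, g j ∈ W j) → g ∈ Embs H G) :
    (H.blowUp s).IsSubgraph G := by
  have hdis : ∀ {j j' : Fin m} {x : Fin n}, x ∈ W j → x ∈ W j' → j = j' := by
    intro j j' x hj hj'
    by_contra hne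
    set g : Fin m → Fin n := fun j'' =>
      if j'' = j then x else if j'' = j' then x else emb (hW1 j'') ⟨0, hs⟩ with hg
    have hmem : ∀ j'', g j'' ∈ W j'' := by
      intro j''
      rw [hg]
      dsimp only
      split
      · rename_i h; rw [h]; exact hj
      · split
        · rename_i h; rw [h]; exact hj'
        · exact emb_mem _ _
    have hinj : Function.Injective g := (mem_Embs.1 (hW2 g hmem)).1
    apply hne
    apply hinj
    rw [hg]
    simp [hne]
  set proj : Fin (m * s) → Fin m := fun x => (finProdFinEquiv.symm x).1 with hproj
  set F : Fin (m * s) → Fin n :=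
    fun x => emb (hW1 (finProdFinEquiv.symm x).1) (finProdFinEquiv.symm x).2 with hF
  have hFmem : ∀ x, F x ∈ W (proj x) := fun x => emb_mem _ _
  have hFinj : Function.Injective F := by
    intro x y hxy
    have hj : (finProdFinEquiv.symm x).1 = (finProdFinEquiv.symm y).1 := by
      apply hdis (hFmem x)
      rw [hxy]
      exact hFmem y
    rw [hF] at hxy
    dsimp only at hxy
    rw [hj] at hxy
    have h2 := emb_injective (hW1 (finProdFinEquiv.symm y).1) hxy
    have := Prod.ext hj h2
    exact finProdFinEquiv.symm.injective this
  refine ⟨F, hFinj, ?_⟩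
  intro i e he
  unfold ColGraph.blowUp at he
  simp only [Finset.mem_filter, Finset.mem_univ, true_and] at he
  obtain ⟨hecard, he₀⟩ := he
  set e₀ := e.image (fun x => (finProdFinEquiv.symm x).1) with he₀def
  have hinjOn : Set.InjOn proj ↑e := by
    apply Finset.injOn_of_card_image_eq
    rw [hecard]
    rw [← he₀def]
    rw [H.card_mem i e₀ he₀]
  set g : Fin m → Fin n := fun j =>
    if h : ∃ x ∈ e, proj x = j then F h.choose else emb (hW1 j) ⟨0, hs⟩ with hgdef
  have hgW : ∀ j, g j ∈ W j := by
    intro j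
    rw [hgdef]
    dsimp only
    split
    · rename_i h
      have hspec := h.choose_spec
      have := hFmem h.choose
      rwa [hspec.2] at this
    · exact emb_mem _ _
  have hgF : ∀ x ∈ e, g (proj x) = F x := by
    intro x hx
    have hex : ∃ x' ∈ e, proj x' = proj x := ⟨x, hx, rfl⟩
    rw [hgdef]
    dsimp only
    rw [dif_pos hex]
    congr 1
    exact hinjOn (Finset.mem_coe.2 hex.choose_spec.1) (Finset.mem_coe.2 hx) hex.choose_spec.2
  have himg : e.image F = e₀.image g := by
    apply Finset.Subset.antisymm
    · intro y hy
      rw [Finset.mem_image] at hy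
      obtain ⟨x, hx, rfl⟩ := hy
      rw [Finset.mem_image]
      refine ⟨proj x, ?_, hgF x hx⟩
      rw [he₀def]
      exact Finset.mem_image_of_mem _ hx
    · intro y hy
      rw [Finset.mem_image] at hy
      obtain ⟨j, hj, rfl⟩ := hy
      rw [he₀def, Finset.mem_image] at hj
      obtain ⟨x, hx, rfl⟩ := hj
      rw [hgF x hx]
      exact Finset.mem_image_of_mem _ hx
  rw [himg]
  exact (mem_Embs.1 (hW2 g hgW)).2 i e₀ he₀

end BTD
namespace BTD

open scoped Classical

lemma upper_ev {k r m : ℕ} (hr : 2 ≤ r) (hrk : r ≤ k) (H : ColGraph k r m) {s : ℕ} (hs : 1 ≤ s)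
    {c : ℝ} (hH : Tendsto H.turanDensityN atTop (nhds c)) {δ : ℝ} (hδ : 0 < δ) :
    ∀ᶠ n in atTop, (H.blowUp s).turanDensityN n ≤ c + δ := by
  have hc0 : (0:ℝ) ≤ c := ge_of_tendsto' hH (fun n => turan_nonneg H n)
  have hk1 : 1 ≤ k := le_trans (by omega) hrk
  have hkR : (0:ℝ) < (k:ℝ) := by exact_mod_cast hk1
  have hπev : ∀ᶠ N in atTop, H.turanDensityN N < c + δ/2 :=
    hH.eventually_lt_const (by linarith)
  obtain ⟨N, hπN, hNge⟩ := (hπev.and (eventually_ge_atTop (max m r))).exists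
  have hmN : m ≤ N := le_trans (le_max_left _ _) hNge
  have hrN : r ≤ N := le_trans (le_max_right _ _) hNge
  have hCNm : (0:ℝ) < (N.choose m : ℝ) := by exact_mod_cast Nat.choose_pos hmN
  set γ : ℝ := δ/(2*k*(N.choose m)) / (2^m * m.factorial) with hγdef
  have hfm : (0:ℝ) < (m.factorial : ℝ) := by exact_mod_cast m.factorial_pos
  have hden1 : (0:ℝ) < 2*k*(N.choose m) := by positivity
  have hden2 : (0:ℝ) < (2:ℝ)^m * m.factorial := by positivity
  have hγ : 0 < γ := div_pos (div_pos hδ hden1) hden2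
  filter_upwards [grid_lemma s hs m γ hγ, eventually_ge_atTop (2*m), eventually_ge_atTop N,
    eventually_ge_atTop 1] with n hgridn h2m hNn hn1
  apply Real.sSup_le _ (by linarith)
  rintro x ⟨G, hGfree, rfl⟩
  by_contra hcon
  push_neg at hcon
  have hG : c + δ ≤ G.density := le_of_lt hcon
  have hss := supersat hrN hmN hNn hδ hc0 hk1 (le_of_lt hπN) hG
  -- lower bound on the number of embeddings
  have hCnm : (0:ℝ) < ((n - m).choose (N - m) : ℝ) := by
    have : N - m ≤ n - m := by omega
    exact_mod_cast Nat.choose_pos this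
  have hidR : ((n.choose N : ℝ)) * (N.choose m) = (n.choose m) * ((n - m).choose (N - m)) := by
    exact_mod_cast congrArg (Nat.cast : ℕ → ℝ) (Nat.choose_mul (n := n) hmN)
  have h1 : (δ/(2*k*(N.choose m)) * (n.choose m : ℝ)) * ((n - m).choose (N - m) : ℝ)
      ≤ ((Embs H G).card : ℝ) * ((n - m).choose (N - m) : ℝ) := by
    calc (δ/(2*k*(N.choose m)) * (n.choose m : ℝ)) * ((n - m).choose (N - m) : ℝ)
        = δ/(2*k) * ((n.choose m : ℝ) * ((n - m).choose (N - m) : ℝ)) / (N.choose m : ℝ) := by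
          ring
      _ = δ/(2*k) * ((n.choose N : ℝ) * (N.choose m : ℝ)) / (N.choose m : ℝ) := by
          rw [hidR]
      _ = δ/(2*k) * (n.choose N : ℝ) := by
          field_simp
      _ ≤ _ := hss
  have hEmb1 : δ/(2*k*(N.choose m)) * (n.choose m : ℝ) ≤ ((Embs H G).card : ℝ) :=
    le_of_mul_le_mul_right h1 hCnm
  have hpow : ((n:ℝ)/2)^m / (m.factorial : ℝ) ≤ (n.choose m : ℝ) := by
    have hmn1 : m ≤ n + 1 := by omega
    have hcast : ((n + 1 - m : ℕ) : ℝ) = (n:ℝ) + 1 - m := by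
      rw [Nat.cast_sub hmn1]
      push_cast
      ring
    have hbase : (n:ℝ)/2 ≤ ((n + 1 - m : ℕ) : ℝ) := by
      rw [hcast]
      have : (2*m : ℕ) ≤ n := h2m
      have : (2*(m:ℝ)) ≤ (n:ℝ) := by exact_mod_cast this
      linarith
    calc ((n:ℝ)/2)^m / (m.factorial : ℝ)
        ≤ ((n + 1 - m : ℕ) : ℝ)^m / (m.factorial : ℝ) := by
          gcongr
      _ ≤ (n.choose m : ℝ) := by
          have h := Nat.pow_le_choose (α := ℝ) m n
          push_cast at h ⊢
          exact h
  have hEmb : γ * (n:ℝ)^m ≤ ((Embs H G).card : ℝ) := by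
    have heq : γ * (n:ℝ)^m = δ/(2*k*(N.choose m)) * (((n:ℝ)/2)^m / (m.factorial : ℝ)) := by
      rw [hγdef, div_pow]
      field_simp
    rw [heq]
    calc δ/(2*k*(N.choose m)) * (((n:ℝ)/2)^m / (m.factorial : ℝ))
        ≤ δ/(2*k*(N.choose m)) * (n.choose m : ℝ) := by
          apply mul_le_mul_of_nonneg_left hpow (le_of_lt (div_pos hδ hden1))
      _ ≤ _ := hEmb1
  obtain ⟨W, hW1, hW2⟩ := hgridn (Embs H G) hEmb
  exact hGfree (blowup_of_grid hs W hW1 hW2)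

end BTD
set_option maxHeartbeats 800000 in
theorem blowup_turan_density {k r m : ℕ} (hr : 2 ≤ r) (hrk : r ≤ k)
    (H : ColGraph k r m) (s : ℕ) (hs : 1 ≤ s) (c : ℝ)
    (hH : Filter.Tendsto H.turanDensityN Filter.atTop (nhds c)) :
    Filter.Tendsto (H.blowUp s).turanDensityN Filter.atTop (nhds c) := by
  rw [Metric.tendsto_atTop]
  intro ε hε
  have hδ : (0:ℝ) < ε/2 := by linarith
  have hupper := BTD.upper_ev hr hrk H hs hH hδ
  have hlower : ∀ᶠ n in atTop, c - ε/2 < H.turanDensityN n :=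
    hH.eventually_const_lt (by linarith)
  obtain ⟨n₀, hn₀⟩ := Filter.eventually_atTop.1 (hupper.and hlower)
  refine ⟨n₀, fun n hn => ?_⟩
  obtain ⟨hu, hl⟩ := hn₀ n hn
  have hmono := BTD.turan_mono_blowUp H hs n
  rw [Real.dist_eq, abs_lt]
  constructor <;> linarith
end

section
/- Let K_3 denote the 2-colored triangle on vertex set {1,2,3} in which each of the three pairs 12, 13, 23 is both a red edge and a blue edge. For every n ≥ 1, the maximum of |E_r(G)| + |E_b(G)| over all K_3-free 2-colored graphs G on n vertices equals C(n,2) + ⌊n²/4⌋. In particular, π_n(K_3) → 3/2 as n → ∞. -/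
open Finset Filter

section K3Aux


lemma pair_eq_cases {V : Type*} [DecidableEq V] {f : Finset V} (hf : f.card = 2)
    {x : V} (hx : x ∈ f) : ∃ y, y ≠ x ∧ f = {x, y} := by
  obtain ⟨a, b, hab, rfl⟩ := Finset.card_eq_two.mp hf
  rcases Finset.mem_insert.mp hx with rfl | hb
  · exact ⟨b, hab.symm, rfl⟩
  · rcases Finset.mem_singleton.mp hb with rfl
    exact ⟨a, hab, by rw [Finset.pair_comm]⟩

lemma mantel {n : ℕ} (s : Finset (Fin n)) :
    ∀ D : Finset (Finset (Fin n)), (∀ e ∈ D, e.card = 2) → (∀ e ∈ D, e ⊆ s) →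
    (∀ a b c : Fin n, {a,b} ∈ D → {a,c} ∈ D → {b,c} ∈ D → False) →
    D.card ≤ s.card ^ 2 / 4 := by
  induction s using Finset.strongInduction with
  | _ s ih =>
  intro D hcard hsub htf
  rcases D.eq_empty_or_nonempty with rfl | ⟨e, he⟩
  · simp
  obtain ⟨u, v, huv, rfl⟩ := Finset.card_eq_two.mp (hcard e he)
  have hus : u ∈ s := hsub _ he (by simp)
  have hvs : v ∈ s := hsub _ he (by simp)
  set s' : Finset (Fin n) := s \ {u, v} with hs'
  have hss : s' ⊂ s := Finset.sdiff_ssubset (by simp [Finset.insert_subset_iff, hus, hvs])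
    (by simp)
  set D' : Finset (Finset (Fin n)) := D.filter (· ⊆ s') with hD'
  have h1 : D'.card ≤ s'.card ^ 2 / 4 := by
    refine ih s' hss D' (fun e he => hcard e (Finset.mem_filter.mp he).1)
      (fun e he => (Finset.mem_filter.mp he).2) ?_
    intro a b c ha hb hc
    exact htf a b c (Finset.mem_filter.mp ha).1 (Finset.mem_filter.mp hb).1
      (Finset.mem_filter.mp hc).1
  -- the rest
  set g : Finset (Fin n) → Fin n := fun f => WithTop.untopD u (f \ {u, v}).min with hg
  -- characterize elements of D \ D'
  have hchar : ∀ f ∈ D \ D', f = {u, v} ∨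
      (∃ w, w ∉ ({u, v} : Finset (Fin n)) ∧ w ∈ s ∧ g f = w ∧ (f = {u, w} ∨ f = {v, w})) := by
    intro f hf
    obtain ⟨hfD, hfD'⟩ := Finset.mem_sdiff.mp hf
    have hnsub : ¬ f ⊆ s' := fun h => hfD' (Finset.mem_filter.mpr ⟨hfD, h⟩)
    have : ∃ x ∈ f, x ∈ ({u, v} : Finset (Fin n)) := by
      by_contra h
      push_neg at h
      exact hnsub fun x hx => Finset.mem_sdiff.mpr ⟨hsub _ hfD hx, h x hx⟩
    obtain ⟨x, hxf, hxuv⟩ := this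
    obtain ⟨y, hyx, hfy⟩ := pair_eq_cases (hcard f hfD) hxf
    by_cases hyuv : y ∈ ({u, v} : Finset (Fin n))
    · left
      simp only [Finset.mem_insert, Finset.mem_singleton] at hxuv hyuv
      rcases hxuv with rfl | rfl <;> rcases hyuv with rfl | rfl
      · exact absurd rfl hyx
      · exact hfy
      · rw [hfy, Finset.pair_comm]
      · exact absurd rfl hyx
    · right
      refine ⟨y, hyuv, hsub _ hfD (hfy ▸ by simp), ?_, ?_⟩
      · have : f \ {u, v} = {y} := by
          rw [hfy]
          ext z
          simp only [Finset.mem_sdiff, Finset.mem_insert, Finset.mem_singleton]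
          constructor
          · rintro ⟨rfl | rfl, hz⟩
            · exact absurd hxuv (by simpa using hz)
            · rfl
          · rintro rfl
            exact ⟨Or.inr rfl, by simpa using hyuv⟩
        rw [hg]
        simp [this]
      · rcases Finset.mem_insert.mp hxuv with rfl | hx
        · left; exact hfy
        · right; rw [← Finset.mem_singleton.mp hx]; exact hfy
  have hguv : g {u, v} = u := by
    have : ({u, v} : Finset (Fin n)) \ {u, v} = ∅ := Finset.sdiff_self _
    rw [hg]; simp [this]
  have h2 : (D \ D').card ≤ s.card - 1 := by
    have : (D \ D').card ≤ (s.erase v).card := by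
      apply Finset.card_le_card_of_injOn g
      · intro f hf
        rcases hchar f hf with rfl | ⟨w, hw, hws, hgf, _⟩
        · rw [hguv]; exact Finset.mem_erase.mpr ⟨huv, hus⟩
        · rw [hgf]; exact Finset.mem_erase.mpr ⟨by simp at hw; tauto, hws⟩
      · intro f₁ h₁ f₂ h₂ heq
        rcases hchar f₁ h₁ with rfl | ⟨w₁, hw₁, _, hg₁, hc₁⟩ <;>
          rcases hchar f₂ h₂ with rfl | ⟨w₂, hw₂, _, hg₂, hc₂⟩
        · rfl
        · rw [hguv] at heq; rw [hg₂] at heq; simp [← heq] at hw₂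
        · rw [hguv] at heq; rw [hg₁] at heq; simp [heq] at hw₁
        · rw [hg₁, hg₂] at heq
          subst heq
          have hD₁ := (Finset.mem_sdiff.mp h₁).1
          have hD₂ := (Finset.mem_sdiff.mp h₂).1
          rcases hc₁ with rfl | rfl <;> rcases hc₂ with rfl | rfl
          · rfl
          · exact (htf u v w₁ he hD₁ hD₂).elim
          · exact (htf u v w₁ he hD₂ hD₁).elim
          · rfl
    calc (D \ D').card ≤ (s.erase v).card := this
      _ = s.card - 1 := Finset.card_erase_of_mem hvs
  have hDsplit : D.card = D'.card + (D \ D').card := by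
    have hsub' : D' ⊆ D := hD' ▸ Finset.filter_subset _ _
    have h3 := Finset.card_sdiff_of_subset hsub'
    have h4 := Finset.card_le_card hsub'
    omega
  have hs'card : s'.card = s.card - 2 := by
    rw [hs', Finset.card_sdiff_of_subset (by simp [Finset.insert_subset_iff, hus, hvs])]
    simp [Finset.card_insert_of_notMem, huv]
  have hs2 : 2 ≤ s.card := by
    have : ({u, v} : Finset (Fin n)).card ≤ s.card :=
      Finset.card_le_card (by simp [Finset.insert_subset_iff, hus, hvs])
    simpa [Finset.card_insert_of_notMem, huv] using this
  -- arithmetic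
  set m := s.card - 2 with hm
  have hsm : s.card = m + 2 := by omega
  rw [hs'card] at h1
  have key : (m + 2) ^ 2 / 4 = m ^ 2 / 4 + (m + 1) := by
    have h4 : (m + 2) ^ 2 = m ^ 2 + 4 * (m + 1) := by ring
    rw [h4, Nat.add_mul_div_left _ _ (by norm_num : 0 < 4)]
  rw [hsm, key]
  omega

lemma k3sub {n : ℕ} (G : ColGraph 2 2 n) {a b c : Fin n}
    (hab : {a,b} ∈ G.E 0 ∩ G.E 1) (hac : {a,c} ∈ G.E 0 ∩ G.E 1)
    (hbc : {b,c} ∈ G.E 0 ∩ G.E 1) : K3.IsSubgraph G := by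
  have c2 : ∀ {x y : Fin n}, {x,y} ∈ G.E 0 ∩ G.E 1 → x ≠ y := by
    intro x y h heq
    subst heq
    have := G.card_mem 0 _ (Finset.mem_inter.mp h).1
    simp at this
  have hab' := c2 hab; have hac' := c2 hac; have hbc' := c2 hbc
  have gab := Finset.mem_inter.mp hab
  have gac := Finset.mem_inter.mp hac
  have gbc := Finset.mem_inter.mp hbc
  clear hab hac hbc
  refine ⟨![a,b,c], ?_, ?_⟩
  · intro i j hij
    fin_cases i <;> fin_cases j <;>
      first | rfl | (exact absurd hij (by assumption)) |
        (exact absurd hij.symm (by assumption))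
  · intro i e he
    have hK : K3.E i = {{0,1},{0,2},{1,2}} := by fin_cases i <;> rfl
    rw [hK] at he
    have hGi : G.E i = G.E 0 ∨ G.E i = G.E 1 := by fin_cases i <;> simp
    simp only [Finset.mem_insert, Finset.mem_singleton] at he
    have himg : ∀ x y : Fin 3, Finset.image ![a,b,c] {x, y} = {![a,b,c] x, ![a,b,c] y} := by
      intro x y; simp
    rcases he with rfl | rfl | rfl <;>
      rw [himg] <;>
      simp only [Matrix.cons_val_zero, Matrix.cons_val_one, Matrix.head_cons,
        Matrix.cons_val_two, Matrix.tail_cons] <;>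
      rcases hGi with h | h <;> rw [h]
    · exact gab.1
    · exact gab.2
    · exact gac.1
    · exact gac.2
    · exact gbc.1
    · exact gbc.2

lemma pair_eq {V : Type*} [DecidableEq V] {a b c d : V} (hab : a ≠ b)
    (h : ({a,b} : Finset V) = {c,d}) : (a = c ∧ b = d) ∨ (a = d ∧ b = c) := by
  have ha : a ∈ ({c,d} : Finset V) := h ▸ (by simp)
  have hb : b ∈ ({c,d} : Finset V) := h ▸ (by simp)
  have hc : c ∈ ({a,b} : Finset V) := h ▸ (by simp)
  simp only [Finset.mem_insert, Finset.mem_singleton] at ha hb hc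
  rcases ha with rfl | rfl <;> rcases hb with h1 | h1 <;> tauto

section Construction
variable (n : ℕ)

def Spart : Finset (Fin n) := univ.filter (fun x : Fin n => (x : ℕ) < n / 2)

def crossE : Finset (Finset (Fin n)) :=
  ((Spart n) ×ˢ (Spart n)ᶜ).image fun p => ({p.1, p.2} : Finset (Fin n))

lemma crossE_mem {e : Finset (Fin n)} :
    e ∈ crossE n ↔ ∃ a b : Fin n, a ∈ Spart n ∧ b ∉ Spart n ∧ e = {a, b} := by
  simp only [crossE, Finset.mem_image, Finset.mem_product, Finset.mem_compl, Prod.exists]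
  constructor
  · rintro ⟨a, b, ⟨ha, hb⟩, rfl⟩; exact ⟨a, b, ha, hb, rfl⟩
  · rintro ⟨a, b, ha, hb, rfl⟩; exact ⟨a, b, ⟨ha, hb⟩, rfl⟩

lemma crossE_card2 : ∀ e ∈ crossE n, e.card = 2 := by
  intro e he
  obtain ⟨a, b, ha, hb, rfl⟩ := (crossE_mem n).mp he
  exact Finset.card_pair (fun h => hb (h ▸ ha))

lemma crossE_card (hn : 1 ≤ n) : (crossE n).card = n ^ 2 / 4 := by
  have hinj : Set.InjOn (fun p : Fin n × Fin n => ({p.1, p.2} : Finset (Fin n)))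
      (((Spart n) ×ˢ (Spart n)ᶜ : Finset _) : Set _) := by
    rintro ⟨a, b⟩ hp ⟨c, d⟩ hq h
    simp only [Finset.mem_coe, Finset.mem_product, Finset.mem_compl] at hp hq
    have hab : a ≠ b := fun h' => hp.2 (h' ▸ hp.1)
    rcases pair_eq hab h with ⟨rfl, rfl⟩ | ⟨rfl, rfl⟩
    · rfl
    · exact absurd hp.1 hq.2
  rw [crossE, Finset.card_image_of_injOn hinj, Finset.card_product, Finset.card_compl]
  have hS : (Spart n).card = n / 2 := by
    have hlt : n / 2 < n := Nat.div_lt_self hn (by norm_num)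
    have : Spart n = Finset.Iio (⟨n / 2, hlt⟩ : Fin n) := by
      ext x; simp [Spart, Fin.lt_def]
    rw [this, Fin.card_Iio]
  rw [hS, Fintype.card_fin]
  obtain ⟨m, rfl | rfl⟩ := n.even_or_odd'
  · have h1 : 2 * m / 2 = m := by omega
    have h2 : (2 * m) ^ 2 = 4 * (m * m) := by ring
    have h3 : m * (2 * m - m) = m * m := by rw [show 2 * m - m = m by omega]
    rw [h1, h2, h3]; omega
  · have h1 : (2 * m + 1) / 2 = m := by omega
    have h2 : (2 * m + 1) ^ 2 = 4 * (m * m + m) + 1 := by ring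
    have h3 : m * (2 * m + 1 - m) = m * m + m := by
      rw [show 2 * m + 1 - m = m + 1 by omega]; ring
    rw [h1, h2, h3]; omega

def exG : ColGraph 2 2 n :=
  mk2 (Finset.univ.powersetCard 2) (crossE n)
    (fun e he => (Finset.mem_powersetCard.mp he).2) (crossE_card2 n)

lemma exG_E0 : (exG n).E 0 = Finset.univ.powersetCard 2 := rfl
lemma exG_E1 : (exG n).E 1 = crossE n := rfl

lemma exG_free : ¬ K3.IsSubgraph (exG n) := by
  rintro ⟨f, hinj, hmem⟩
  have key : ∀ x y : Fin 3, x ≠ y →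
      (f x ∈ Spart n ∧ f y ∉ Spart n) ∨ (f y ∈ Spart n ∧ f x ∉ Spart n) := by
    intro x y hxy
    have h1 : ({x, y} : Finset (Fin 3)).image f ∈ (exG n).E 1 := by
      apply hmem 1
      fin_cases x <;> fin_cases y <;> first | (exact absurd rfl hxy) | decide
    rw [Finset.image_insert, Finset.image_singleton, exG_E1] at h1
    obtain ⟨a, b, ha, hb, hab⟩ := (crossE_mem n).mp h1
    rcases pair_eq (hinj.ne hxy) hab with ⟨h2, h3⟩ | ⟨h2, h3⟩
    · exact Or.inl ⟨h2 ▸ ha, h3 ▸ hb⟩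
    · exact Or.inr ⟨h3 ▸ ha, h2 ▸ hb⟩
  have h01 := key 0 1 (by decide)
  have h02 := key 0 2 (by decide)
  have h12 := key 1 2 (by decide)
  tauto

lemma exG_sum (hn : 1 ≤ n) :
    ((exG n).E 0).card + ((exG n).E 1).card = n.choose 2 + n ^ 2 / 4 := by
  rw [exG_E0, exG_E1, Finset.card_powersetCard, Finset.card_univ, Fintype.card_fin,
    crossE_card n hn]
end Construction

lemma pair_eq_cases' {V : Type*} [DecidableEq V] {f : Finset V} (hf : f.card = 2)
    {x : V} (hx : x ∈ f) : ∃ y, y ≠ x ∧ f = {x, y} := by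
  obtain ⟨a, b, hab, rfl⟩ := Finset.card_eq_two.mp hf
  rcases Finset.mem_insert.mp hx with rfl | hb
  · exact ⟨b, hab.symm, rfl⟩
  · rcases Finset.mem_singleton.mp hb with rfl
    exact ⟨a, hab, by rw [Finset.pair_comm]⟩

lemma sum_le_bound {n : ℕ} (G : ColGraph 2 2 n) (hfree : ¬ K3.IsSubgraph G)
    (mantel : ∀ D : Finset (Finset (Fin n)), (∀ e ∈ D, e.card = 2) →
      (∀ e ∈ D, e ⊆ (univ : Finset (Fin n))) →
      (∀ a b c : Fin n, {a,b} ∈ D → {a,c} ∈ D → {b,c} ∈ D → False) →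
      D.card ≤ (univ : Finset (Fin n)).card ^ 2 / 4) :
    (G.E 0).card + (G.E 1).card ≤ n.choose 2 + n ^ 2 / 4 := by
  have h1 : (G.E 0 ∪ G.E 1).card ≤ n.choose 2 := by
    have hsub : G.E 0 ∪ G.E 1 ⊆ Finset.univ.powersetCard 2 := by
      intro e he
      rcases Finset.mem_union.mp he with h | h
      · exact Finset.mem_powersetCard.mpr ⟨Finset.subset_univ _, G.card_mem 0 e h⟩
      · exact Finset.mem_powersetCard.mpr ⟨Finset.subset_univ _, G.card_mem 1 e h⟩
    calc (G.E 0 ∪ G.E 1).card ≤ (Finset.univ.powersetCard 2).card := Finset.card_le_card hsub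
      _ = n.choose 2 := by rw [Finset.card_powersetCard, Finset.card_univ, Fintype.card_fin]
  have h2 : (G.E 0 ∩ G.E 1).card ≤ n ^ 2 / 4 := by
    have := mantel (G.E 0 ∩ G.E 1)
      (fun e he => G.card_mem 0 e (Finset.mem_inter.mp he).1)
      (fun e _ => Finset.subset_univ e)
      (fun a b c hab hac hbc => hfree (k3sub G hab hac hbc))
    rwa [Finset.card_univ, Fintype.card_fin] at this
  have h3 := Finset.card_union_add_card_inter (G.E 0) (G.E 1)
  omega

lemma turan_eq {n : ℕ} (hn : 2 ≤ n) :
    K3.turanDensityN n = ((n.choose 2 + n ^ 2 / 4 : ℕ) : ℝ) / ((n.choose 2 : ℕ) : ℝ) := by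
  have hcpos : (0 : ℝ) < ((n.choose 2 : ℕ) : ℝ) := by
    exact_mod_cast Nat.choose_pos hn
  apply IsGreatest.csSup_eq
  constructor
  · refine ⟨exG n, exG_free n, ?_⟩
    rw [ColGraph.density, Fin.sum_univ_two, ← Nat.cast_add, exG_sum n (by omega)]
  · rintro x ⟨G, hfree, rfl⟩
    rw [ColGraph.density, Fin.sum_univ_two]
    rw [div_le_div_iff_of_pos_right hcpos]
    have hle := sum_le_bound G hfree (mantel Finset.univ)
    exact_mod_cast hle

lemma aux_lim (a : ℝ) :
    Filter.Tendsto (fun m : ℕ => ((m : ℝ) ^ 2 + a) / (2 * (m : ℝ) ^ 2 - 2 * m))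
      Filter.atTop (nhds (1 / 2)) := by
  have h1 : Filter.Tendsto
      (fun m : ℕ => (1 + a * ((1 / (m : ℝ)) * (1 / (m : ℝ)))) / (2 - 2 * (1 / (m : ℝ))))
      Filter.atTop (nhds ((1 + a * (0 * 0)) / (2 - 2 * 0))) := by
    apply Filter.Tendsto.div
    · exact tendsto_const_nhds.add (tendsto_const_nhds.mul
        (tendsto_one_div_atTop_nhds_zero_nat.mul tendsto_one_div_atTop_nhds_zero_nat))
    · exact tendsto_const_nhds.sub (tendsto_const_nhds.mul tendsto_one_div_atTop_nhds_zero_nat)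
    · norm_num
  rw [show ((1 + a * ((0:ℝ) * 0)) / (2 - 2 * 0) : ℝ) = 1 / 2 by norm_num] at h1
  apply h1.congr'
  filter_upwards [Filter.eventually_ge_atTop 2] with m hm
  have hm2 : (2 : ℝ) ≤ (m : ℝ) := by exact_mod_cast hm
  have hm0 : (m : ℝ) ≠ 0 := by linarith
  have hd1 : 2 - 2 * (1 / (m : ℝ)) ≠ 0 := by
    have : 2 * (1 / (m : ℝ)) ≤ 1 := by
      rw [mul_one_div]
      rw [div_le_one (by linarith)]
      linarith
    linarith
  have hd2 : 2 * (m : ℝ) ^ 2 - 2 * m ≠ 0 := by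
    have : (m : ℝ) ^ 2 ≥ 2 * m := by nlinarith
    nlinarith
  rw [div_eq_div_iff hd1 hd2]
  field_simp

lemma turan_tendsto :
    Filter.Tendsto K3.turanDensityN Filter.atTop (nhds (3 / 2)) := by
  have hlow : Filter.Tendsto
      (fun m : ℕ => 1 + ((m : ℝ) ^ 2 + (-3)) / (2 * (m : ℝ) ^ 2 - 2 * m))
      Filter.atTop (nhds (1 + 1 / 2)) := tendsto_const_nhds.add (aux_lim (-3))
  have hhigh : Filter.Tendsto
      (fun m : ℕ => 1 + ((m : ℝ) ^ 2 + 0) / (2 * (m : ℝ) ^ 2 - 2 * m))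
      Filter.atTop (nhds (1 + 1 / 2)) := tendsto_const_nhds.add (aux_lim 0)
  rw [show (1 : ℝ) + 1 / 2 = 3 / 2 by norm_num] at hlow hhigh
  apply tendsto_of_tendsto_of_tendsto_of_le_of_le' hlow hhigh
  · filter_upwards [Filter.eventually_ge_atTop 2] with m hm
    have hcpos : (0 : ℝ) < ((m.choose 2 : ℕ) : ℝ) := by
      exact_mod_cast Nat.choose_pos hm
    have hc : ((m.choose 2 : ℕ) : ℝ) = m * ((m : ℝ) - 1) / 2 := Nat.cast_choose_two (K := ℝ) m
    have hM : ((m.choose 2 + m ^ 2 / 4 : ℕ) : ℝ) / ((m.choose 2 : ℕ) : ℝ)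
        = 1 + ((m ^ 2 / 4 : ℕ) : ℝ) / ((m.choose 2 : ℕ) : ℝ) := by
      rw [Nat.cast_add, add_div, div_self hcpos.ne']
    have hq1 : ((m : ℝ) ^ 2 - 3) / 4 ≤ ((m ^ 2 / 4 : ℕ) : ℝ) := by
      have h : m ^ 2 ≤ 4 * (m ^ 2 / 4) + 3 := by omega
      have h' : ((m ^ 2 : ℕ) : ℝ) ≤ ((4 * (m ^ 2 / 4) + 3 : ℕ) : ℝ) := by exact_mod_cast h
      push_cast at h'
      linarith
    have hden : 2 * (m : ℝ) ^ 2 - 2 * m = 4 * ((m.choose 2 : ℕ) : ℝ) := by rw [hc]; ring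
    rw [turan_eq hm, hM, show ((m : ℝ) ^ 2 + (-3)) = (m : ℝ) ^ 2 - 3 by ring, hden,
      ← div_div]
    exact (add_le_add_iff_left 1).mpr ((div_le_div_iff_of_pos_right hcpos).mpr hq1)
  · filter_upwards [Filter.eventually_ge_atTop 2] with m hm
    have hcpos : (0 : ℝ) < ((m.choose 2 : ℕ) : ℝ) := by
      exact_mod_cast Nat.choose_pos hm
    have hc : ((m.choose 2 : ℕ) : ℝ) = m * ((m : ℝ) - 1) / 2 := Nat.cast_choose_two (K := ℝ) m
    have hM : ((m.choose 2 + m ^ 2 / 4 : ℕ) : ℝ) / ((m.choose 2 : ℕ) : ℝ)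
        = 1 + ((m ^ 2 / 4 : ℕ) : ℝ) / ((m.choose 2 : ℕ) : ℝ) := by
      rw [Nat.cast_add, add_div, div_self hcpos.ne']
    have hq2 : ((m ^ 2 / 4 : ℕ) : ℝ) ≤ ((m : ℝ) ^ 2 + 0) / 4 := by
      have h : 4 * (m ^ 2 / 4) ≤ m ^ 2 := by omega
      have h' : ((4 * (m ^ 2 / 4) : ℕ) : ℝ) ≤ ((m ^ 2 : ℕ) : ℝ) := by exact_mod_cast h
      push_cast at h'
      linarith
    have hden : 2 * (m : ℝ) ^ 2 - 2 * m = 4 * ((m.choose 2 : ℕ) : ℝ) := by rw [hc]; ring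
    rw [turan_eq hm, hM, hden, ← div_div]
    exact (add_le_add_iff_left 1).mpr ((div_le_div_iff_of_pos_right hcpos).mpr hq2)

end K3Aux

theorem K3_extremal :
    (∀ n : ℕ, 1 ≤ n →
      IsGreatest {N : ℕ | ∃ G : ColGraph 2 2 n, ¬ K3.IsSubgraph G ∧
          (G.E 0).card + (G.E 1).card = N} (n.choose 2 + n ^ 2 / 4)) ∧
    Filter.Tendsto K3.turanDensityN Filter.atTop (nhds (3 / 2)) := by
  constructor
  · intro n hn
    constructor
    · exact ⟨exG n, exG_free n, exG_sum n hn⟩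
    · rintro N ⟨G, hfree, rfl⟩
      exact sum_le_bound G hfree (mantel Finset.univ)
  · exact turan_tendsto
end

section
/- Let T be the 2-colored graph with vertex set {1,2,3,4}, red edges {12, 13, 34} and blue edges {12, 23, 34}. Every T-free 2-colored graph G on n vertices satisfies |E_r(G)| + |E_b(G)| ≤ C(n+1, 2). Consequently π_n(T) → 1 as n → ∞, i.e., T is degenerate. -/
open Finset Filter

section TDegenerateProof

open Finset

lemma core_count {n : ℕ} (dbl : Finset (Finset (Fin n))) (Miss : Finset (Fin n) → Prop)
    [DecidablePred Miss]
    (h2 : ∀ e ∈ dbl, e.card = 2)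
    (hMd : ∀ p, Miss p → p ∉ dbl)
    (hK : ∀ w x y z : Fin n, w ≠ x → w ≠ y → w ≠ z → x ≠ y → x ≠ z → y ≠ z →
      ({w,x} : Finset (Fin n)) ∈ dbl → ({x,y} : Finset (Fin n)) ∈ dbl →
      ({y,z} : Finset (Fin n)) ∈ dbl → Miss {x,z}) :
    ∀ V : Finset (Fin n),
      (dbl.filter (fun e => e ⊆ V)).card ≤ V.card + ((V.powersetCard 2).filter Miss).card := by
  intro V
  induction V using Finset.strongInduction with
  | _ V ih =>
  set D := dbl.filter (fun e => e ⊆ V) with hD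
  set deg := fun v => (D.filter (fun e => v ∈ e)).card with hdeg
  have hsplit : ∀ u ∈ V, D.card =
      (dbl.filter (fun e => e ⊆ V.erase u)).card + deg u := by
    intro u hu
    have h1 : (D.filter (fun e => ¬ u ∈ e)) = dbl.filter (fun e => e ⊆ V.erase u) := by
      ext e
      simp only [hD, mem_filter, Finset.subset_erase, and_assoc]
    have h2 := Finset.card_filter_add_card_filter_not (s := D) (p := fun e => u ∈ e)
    rw [h1] at h2
    simp only [hdeg]
    omega
  have hMsub : ∀ u ∈ V, (((V.erase u).powersetCard 2).filter Miss) ⊆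
      ((V.powersetCard 2).filter Miss).filter (fun p => u ∉ p) := by
    intro u hu p hp
    simp only [mem_filter, Finset.mem_powersetCard, Finset.subset_erase] at hp ⊢
    tauto
  by_cases hlow : ∃ v ∈ V, deg v ≤ 1
  · obtain ⟨v, hvV, hv1⟩ := hlow
    have ihv := ih (V.erase v) (Finset.erase_ssubset hvV)
    have h1 := hsplit v hvV
    have hle : ((( V.erase v).powersetCard 2).filter Miss).card ≤
        ((V.powersetCard 2).filter Miss).card :=
      Finset.card_le_card ((hMsub v hvV).trans (Finset.filter_subset _ _))
    have h3 : (V.erase v).card = V.card - 1 := Finset.card_erase_of_mem hvV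
    have h4 : 1 ≤ V.card := Finset.card_pos.mpr ⟨v, hvV⟩
    omega
  push_neg at hlow
  by_cases hhigh : ∀ v ∈ V, deg v ≤ 2
  · have hcards : ∀ e ∈ D, (V.filter (fun v => v ∈ e)).card = 2 := by
      intro e he
      rw [Finset.filter_mem_eq_inter, Finset.inter_eq_right.mpr (mem_filter.mp he).2]
      exact h2 e (mem_filter.mp he).1
    have hsum : ∑ v ∈ V, deg v = 2 * D.card := by
      calc ∑ v ∈ V, deg v = ∑ v ∈ V, ∑ e ∈ D, if v ∈ e then 1 else 0 := by
            simp only [hdeg, Finset.card_filter]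
        _ = ∑ e ∈ D, ∑ v ∈ V, if v ∈ e then 1 else 0 := Finset.sum_comm
        _ = ∑ e ∈ D, (V.filter (fun v => v ∈ e)).card := by
            simp only [Finset.card_filter]
        _ = ∑ e ∈ D, 2 := Finset.sum_congr rfl hcards
        _ = 2 * D.card := by
            rw [Finset.sum_const, smul_eq_mul, Nat.mul_comm]
    have hle : ∑ v ∈ V, deg v ≤ 2 * V.card := by
      calc ∑ v ∈ V, deg v ≤ ∑ v ∈ V, 2 := Finset.sum_le_sum hhigh
        _ = 2 * V.card := by
            rw [Finset.sum_const, smul_eq_mul, Nat.mul_comm]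
    omega
  · push_neg at hhigh
    obtain ⟨v₁, hv₁V, hv₁3⟩ := hhigh
    obtain ⟨v₀, hv₀V, hmax⟩ := Finset.exists_max_image V deg ⟨v₁, hv₁V⟩
    have hΔ : 3 ≤ deg v₀ := le_trans hv₁3 (hmax v₁ hv₁V)
    set Nv := V.filter (fun z => z ≠ v₀ ∧ ({v₀, z} : Finset (Fin n)) ∈ dbl) with hNvdef
    have hNvcard : Nv.card = deg v₀ := by
      apply Finset.card_bij (fun z _ => ({v₀, z} : Finset (Fin n)))
      · intro z hz
        simp only [hNvdef, mem_filter] at hz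
        simp only [hdeg, hD, mem_filter]
        exact ⟨⟨hz.2.2, Finset.insert_subset hv₀V (Finset.singleton_subset_iff.mpr hz.1)⟩,
          Finset.mem_insert_self _ _⟩
      · intro z hz z' hz' he
        simp only [hNvdef, mem_filter] at hz hz'
        have : z ∈ ({v₀, z'} : Finset (Fin n)) :=
          he ▸ Finset.mem_insert_of_mem (Finset.mem_singleton_self z)
        rcases Finset.mem_insert.mp this with h | h
        · exact absurd h hz.2.1
        · exact Finset.mem_singleton.mp h
      · intro e he
        simp only [hdeg, hD, mem_filter] at he
        obtain ⟨⟨hed, heV⟩, hv₀e⟩ := he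
        obtain ⟨x, y, hxy, rfl⟩ := Finset.card_eq_two.mp (h2 e hed)
        rcases Finset.mem_insert.mp hv₀e with h | h
        · subst h
          refine ⟨y, ?_, rfl⟩
          simp only [hNvdef, mem_filter]
          exact ⟨heV (Finset.mem_insert_of_mem (Finset.mem_singleton_self y)), Ne.symm hxy, hed⟩
        · rw [Finset.mem_singleton] at h
          subst h
          have hed' : ({v₀, x} : Finset (Fin n)) ∈ dbl := by
            first
              | exact hed
              | rwa [Finset.pair_comm] at hed
          have hxV : x ∈ V := heV (by simp)
          refine ⟨x, ?_, ?_⟩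
          · simp only [hNvdef, mem_filter]
            exact ⟨hxV, hxy, hed'⟩
          · first
              | exact Finset.pair_comm v₀ x
              | rfl
    -- membership facts for Nv
    have hNvmem : ∀ z ∈ Nv, z ∈ V ∧ z ≠ v₀ ∧ ({v₀, z} : Finset (Fin n)) ∈ dbl := by
      intro z hz
      simpa only [hNvdef, mem_filter] using hz
    -- pick u ∈ Nv
    have hNvne : Nv.Nonempty := Finset.card_pos.mp (by omega)
    obtain ⟨u, huNv⟩ := hNvne
    obtain ⟨huV, huv₀, hudbl⟩ := hNvmem u huNv
    -- (i): no double between u and other neighbors of v₀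
    have hi : ∀ z ∈ Nv, z ≠ u → ({u, z} : Finset (Fin n)) ∉ dbl := by
      intro z hzNv hzu hcon
      obtain ⟨hzV, hzv₀, hzdbl⟩ := hNvmem z hzNv
      -- find w in Nv outside {u, z}
      have hw : (Nv \ {u, z}).Nonempty := by
        apply Finset.card_pos.mp
        have := Finset.le_card_sdiff ({u, z} : Finset (Fin n)) Nv
        have hc2 : ({u, z} : Finset (Fin n)).card ≤ 2 := Finset.card_insert_le _ _ |>.trans (by simp)
        omega
      obtain ⟨w, hwmem⟩ := hw
      obtain ⟨hwNv, hwnot⟩ := Finset.mem_sdiff.mp hwmem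
      obtain ⟨hwV, hwv₀, hwdbl⟩ := hNvmem w hwNv
      have hwu : w ≠ u := fun h => hwnot (by simp [h])
      have hwz : w ≠ z := fun h => hwnot (by simp [h])
      -- P4 (w, v₀, u, z) kills {v₀, z} which is a double: contradiction
      have hwv₀' : ({w, v₀} : Finset (Fin n)) ∈ dbl := by
        rw [Finset.pair_comm]; exact hwdbl
      have hkill := hK w v₀ u z hwv₀ hwu hwz (Ne.symm huv₀) (Ne.symm hzv₀) (Ne.symm hzu)
        hwv₀' hudbl hcon
      exact hMd _ hkill hzdbl
    -- (ii): Miss {u, z} for z other neighbor of v₀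
    have hii : ∀ z ∈ Nv, z ≠ u → Miss ({u, z} : Finset (Fin n)) := by
      intro z hzNv hzu
      obtain ⟨hzV, hzv₀, hzdbl⟩ := hNvmem z hzNv
      -- u has a second incident double edge
      have hdegu : 2 ≤ deg u := hlow u huV
      obtain ⟨e₁, he₁, he₁ne⟩ := Finset.exists_mem_ne (by simp only [hdeg] at hdegu; omega : 1 < (D.filter (fun e => u ∈ e)).card) ({v₀, u} : Finset (Fin n))
      simp only [hD, mem_filter] at he₁
      obtain ⟨⟨he₁d, he₁V⟩, hue₁⟩ := he₁
      obtain ⟨x, y, hxy, hexy⟩ := Finset.card_eq_two.mp (h2 e₁ he₁d)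
      subst hexy
      -- normalize: e₁ = {u, w}
      obtain ⟨w, hwu, he₁uw⟩ : ∃ w, w ≠ u ∧ ({x, y} : Finset (Fin n)) = {u, w} := by
        rcases Finset.mem_insert.mp hue₁ with h | h
        · exact ⟨y, Ne.symm (h.symm ▸ hxy), by rw [← h]⟩
        · rw [Finset.mem_singleton] at h
          exact ⟨x, fun hx => hxy (hx.trans h), by rw [← h, Finset.pair_comm]⟩
      rw [he₁uw] at he₁d he₁V he₁ne
      have hwv₀ : w ≠ v₀ := by
        intro h
        apply he₁ne
        rw [h, Finset.pair_comm]
      have hwz : w ≠ z := by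
        intro h
        exact hi z hzNv hzu (h ▸ he₁d)
      have hwV : w ∈ V := he₁V (Finset.mem_insert_of_mem (Finset.mem_singleton_self w))
      -- P4 (w, u, v₀, z)
      have hwu' : ({w, u} : Finset (Fin n)) ∈ dbl := by
        rw [Finset.pair_comm]; exact he₁d
      have huv₀' : ({u, v₀} : Finset (Fin n)) ∈ dbl := by
        rw [Finset.pair_comm]; exact hudbl
      exact hK w u v₀ z (Ne.symm hwu.symm) hwv₀ hwz huv₀ (Ne.symm hzu) (Ne.symm hzv₀)
        hwu' huv₀' hzdbl
    -- counting
    set pairsU := (Nv.erase u).image (fun z => ({u, z} : Finset (Fin n))) with hpairsU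
    have hpairsUcard : pairsU.card = deg v₀ - 1 := by
      rw [hpairsU, Finset.card_image_of_injOn, Finset.card_erase_of_mem huNv, hNvcard]
      intro z hz z' hz' he
      have hz1 := Finset.mem_erase.mp hz
      have hz1' := Finset.mem_erase.mp hz'
      have he' : ({u, z} : Finset (Fin n)) = {u, z'} := he
      have : z ∈ ({u, z'} : Finset (Fin n)) :=
        he' ▸ Finset.mem_insert_of_mem (Finset.mem_singleton_self z)
      rcases Finset.mem_insert.mp this with h | h
      · exact absurd h hz1.1
      · exact Finset.mem_singleton.mp h
    have hpairsUsub : pairsU ⊆ ((V.powersetCard 2).filter Miss).filter (fun p => u ∈ p) := by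
      intro p hp
      rw [hpairsU, Finset.mem_image] at hp
      obtain ⟨z, hz, rfl⟩ := hp
      obtain ⟨hzNv, hzu⟩ : z ∈ Nv ∧ z ≠ u := by
        have := Finset.mem_erase.mp hz
        exact ⟨this.2, this.1⟩
      obtain ⟨hzV, hzv₀, hzdbl⟩ := hNvmem z hzNv
      simp only [mem_filter, Finset.mem_powersetCard]
      refine ⟨⟨⟨Finset.insert_subset huV (Finset.singleton_subset_iff.mpr hzV), ?_⟩,
        hii z hzNv hzu⟩, Finset.mem_insert_self _ _⟩
      rw [Finset.card_insert_of_notMem (by simp [Ne.symm hzu]), Finset.card_singleton]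
    -- assemble
    have hMVsplit := Finset.card_filter_add_card_filter_not
      (s := (V.powersetCard 2).filter Miss) (p := fun p => u ∈ p)
    have h1 := hsplit u huV
    have ihu := ih (V.erase u) (Finset.erase_ssubset huV)
    have hMle : (((V.erase u).powersetCard 2).filter Miss).card ≤
        (((V.powersetCard 2).filter Miss).filter (fun p => ¬ u ∈ p)).card :=
      Finset.card_le_card (hMsub u huV)
    have hPle : pairsU.card ≤ (((V.powersetCard 2).filter Miss).filter (fun p => u ∈ p)).card :=
      Finset.card_le_card hpairsUsub
    have hdegle : deg u ≤ deg v₀ := hmax u huV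
    have hVcard : (V.erase u).card = V.card - 1 := Finset.card_erase_of_mem huV
    have hV1 : 1 ≤ V.card := Finset.card_pos.mpr ⟨u, huV⟩
    omega


lemma t_embed {n : ℕ} (G : ColGraph 2 2 n) {a b c d : Fin n}
    (hab : a ≠ b) (hac : a ≠ c) (had : a ≠ d) (hbc : b ≠ c) (hbd : b ≠ d) (hcd : c ≠ d)
    (h1 : ({a,b} : Finset (Fin n)) ∈ G.E 0) (h1' : ({a,b} : Finset (Fin n)) ∈ G.E 1)
    (h2 : ({c,d} : Finset (Fin n)) ∈ G.E 0) (h2' : ({c,d} : Finset (Fin n)) ∈ G.E 1)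
    (h3 : ({a,c} : Finset (Fin n)) ∈ G.E 0) (h4 : ({b,c} : Finset (Fin n)) ∈ G.E 1) :
    Tgraph.IsSubgraph G := by
  refine ⟨![a,b,c,d], ?_, ?_⟩
  · intro i j hij
    fin_cases i <;> fin_cases j <;> simp_all
  · intro i e he
    fin_cases i
    · show Finset.image ![a,b,c,d] e ∈ G.E 0
      have he0 : e ∈ Tgraph.E 0 := he
      simp only [Tgraph, mk2, if_true] at he0
      simp only [Finset.mem_insert, Finset.mem_singleton] at he0
      rcases he0 with rfl | rfl | rfl <;>
        · simp only [Finset.image_insert, Finset.image_singleton]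
          norm_num
          assumption
    · show Finset.image ![a,b,c,d] e ∈ G.E 1
      have he1 : e ∈ Tgraph.E 1 := he
      simp only [Tgraph, mk2, if_true] at he1
      rw [if_neg (by decide : ¬ ((1 : Fin 2) = 0))] at he1
      simp only [Finset.mem_insert, Finset.mem_singleton] at he1
      rcases he1 with rfl | rfl | rfl <;>
        · simp only [Finset.image_insert, Finset.image_singleton]
          norm_num
          assumption

lemma t_key {n : ℕ} (G : ColGraph 2 2 n) (hfree : ¬ Tgraph.IsSubgraph G)
    (w x y z : Fin n) (hwx : w ≠ x) (hwy : w ≠ y) (hwz : w ≠ z)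
    (hxy : x ≠ y) (hxz : x ≠ z) (hyz : y ≠ z)
    (d1 : ({w,x} : Finset (Fin n)) ∈ G.E 0 ∩ G.E 1)
    (d2 : ({x,y} : Finset (Fin n)) ∈ G.E 0 ∩ G.E 1)
    (d3 : ({y,z} : Finset (Fin n)) ∈ G.E 0 ∩ G.E 1) :
    ({x,z} : Finset (Fin n)) ∉ G.E 0 ∧ ({x,z} : Finset (Fin n)) ∉ G.E 1 := by
  obtain ⟨d1r, d1b⟩ := Finset.mem_inter.mp d1
  obtain ⟨d2r, d2b⟩ := Finset.mem_inter.mp d2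
  obtain ⟨d3r, d3b⟩ := Finset.mem_inter.mp d3
  constructor
  · intro hR
    -- embedding (a,b,c,d) = (z,y,x,w)
    exact hfree (t_embed G hyz.symm hxz.symm hwz.symm hxy.symm hwy.symm hwx.symm
      (by rwa [Finset.pair_comm]) (by rwa [Finset.pair_comm])
      (by rwa [Finset.pair_comm]) (by rwa [Finset.pair_comm])
      (by rwa [Finset.pair_comm]) (by rwa [Finset.pair_comm]))
  · intro hB
    -- embedding (a,b,c,d) = (y,z,x,w)
    exact hfree (t_embed G hyz hxy.symm hwy.symm hxz.symm hwz.symm hwx.symm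
      d3r d3b
      (by rwa [Finset.pair_comm]) (by rwa [Finset.pair_comm])
      (by rwa [Finset.pair_comm]) (by rwa [Finset.pair_comm]))

lemma t_part1 {n : ℕ} (G : ColGraph 2 2 n) (hfree : ¬ Tgraph.IsSubgraph G) :
    (G.E 0).card + (G.E 1).card ≤ (n + 1).choose 2 := by
  classical
  have hcore := core_count (G.E 0 ∩ G.E 1) (fun p => p ∉ G.E 0 ∧ p ∉ G.E 1)
    (fun e he => G.card_mem 0 e (Finset.mem_inter.mp he).1)
    (fun p hp hmem => hp.1 (Finset.mem_inter.mp hmem).1)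
    (fun w x y z h1 h2 h3 h4 h5 h6 e1 e2 e3 =>
      t_key G hfree w x y z h1 h2 h3 h4 h5 h6 e1 e2 e3)
    Finset.univ
  rw [Finset.filter_true_of_mem (fun e _ => Finset.subset_univ e)] at hcore
  set M := ((Finset.univ : Finset (Fin n)).powersetCard 2).filter
    (fun p => p ∉ G.E 0 ∧ p ∉ G.E 1) with hM
  have hsub : (G.E 0 ∪ G.E 1) ∪ M ⊆ (Finset.univ : Finset (Fin n)).powersetCard 2 := by
    intro e he
    rcases Finset.mem_union.mp he with h | h
    · rw [Finset.mem_powersetCard]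
      rcases Finset.mem_union.mp h with h' | h'
      · exact ⟨Finset.subset_univ e, G.card_mem 0 e h'⟩
      · exact ⟨Finset.subset_univ e, G.card_mem 1 e h'⟩
    · exact (Finset.mem_filter.mp h).1
  have hdisj : Disjoint (G.E 0 ∪ G.E 1) M := by
    rw [Finset.disjoint_left]
    intro e he hem
    have := (Finset.mem_filter.mp hem).2
    rcases Finset.mem_union.mp he with h | h
    · exact this.1 h
    · exact this.2 h
  have hcard : (G.E 0 ∪ G.E 1).card + M.card ≤ n.choose 2 := by
    rw [← Finset.card_union_of_disjoint hdisj]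
    calc ((G.E 0 ∪ G.E 1) ∪ M).card ≤
        ((Finset.univ : Finset (Fin n)).powersetCard 2).card := Finset.card_le_card hsub
      _ = n.choose 2 := by rw [Finset.card_powersetCard]; simp
  have hie := Finset.card_union_add_card_inter (G.E 0) (G.E 1)
  have hpascal : (n + 1).choose 2 = n.choose 1 + n.choose 2 := Nat.choose_succ_succ n 1
  have hch1 : n.choose 1 = n := Nat.choose_one_right n
  have hcardV : (Finset.univ : Finset (Fin n)).card = n := by simp
  omega

def redComplete (n : ℕ) : ColGraph 2 2 n :=
  mk2 ((Finset.univ : Finset (Fin n)).powersetCard 2) ∅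
    (fun e he => (Finset.mem_powersetCard.mp he).2)
    (fun e he => absurd he (Finset.notMem_empty e))

lemma redComplete_free (n : ℕ) : ¬ Tgraph.IsSubgraph (redComplete n) := by
  rintro ⟨f, hinj, hmap⟩
  have hmem : ({0,1} : Finset (Fin 4)) ∈ Tgraph.E 1 := by decide
  have := hmap 1 _ hmem
  simp only [redComplete, mk2] at this
  rw [if_neg (by decide : ¬ ((1 : Fin 2) = 0))] at this
  exact Finset.notMem_empty _ this

lemma redComplete_density {n : ℕ} (hn : 2 ≤ n) : (redComplete n).density = 1 := by
  have hpos : 0 < n.choose 2 := Nat.choose_pos hn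
  unfold ColGraph.density
  rw [Fin.sum_univ_two]
  have h0 : (redComplete n).E 0 = (Finset.univ : Finset (Fin n)).powersetCard 2 := by
    simp [redComplete, mk2]
  have h1 : (redComplete n).E 1 = ∅ := by
    simp only [redComplete, mk2]
    rw [if_neg (by decide : ¬ ((1 : Fin 2) = 0))]
  rw [h0, h1]
  rw [Finset.card_powersetCard]
  simp only [Finset.card_empty, Nat.cast_zero, add_zero, Finset.card_univ, Fintype.card_fin]
  rw [div_self]
  exact_mod_cast hpos.ne'

lemma choose_two_bound {n : ℕ} (hn : 2 ≤ n) : n * n ≤ 4 * n.choose 2 := by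
  obtain ⟨k, hk⟩ := Nat.even_mul_succ_self (n - 1)
  have hs : n - 1 + 1 = n := by omega
  rw [hs] at hk
  have hmul : n * (n - 1) = k + k := by rw [Nat.mul_comm]; exact hk
  have hch : n.choose 2 = k := by
    rw [Nat.choose_two_right, hmul]
    omega
  have hx : n * n ≤ n * (2 * (n - 1)) := Nat.mul_le_mul_left n (by omega)
  rw [show n * (2 * (n - 1)) = 2 * (n * (n - 1)) from by ring, hmul, hch] at *
  linarith

lemma t_upper {n : ℕ} (hn : 2 ≤ n) :
    ∀ x ∈ {x : ℝ | ∃ G : ColGraph 2 2 n, ¬ Tgraph.IsSubgraph G ∧ G.density = x},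
      x ≤ 1 + 4 / (n : ℝ) := by
  rintro x ⟨G, hfree, rfl⟩
  have hpos : 0 < n.choose 2 := Nat.choose_pos hn
  have hC : (0 : ℝ) < (n.choose 2 : ℝ) := by exact_mod_cast hpos
  have hn0 : (0 : ℝ) < (n : ℝ) := by positivity
  have hnum : ((G.E 0).card : ℝ) + ((G.E 1).card : ℝ) ≤ (n.choose 2 : ℝ) + (n : ℝ) := by
    have h := t_part1 G hfree
    have hpascal : (n + 1).choose 2 = n.choose 1 + n.choose 2 := rfl
    rw [Nat.choose_one_right] at hpascal
    rw [hpascal] at h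
    have h2 : (G.E 0).card + (G.E 1).card ≤ n.choose 2 + n := by omega
    exact_mod_cast h2
  unfold ColGraph.density
  rw [Fin.sum_univ_two]
  calc ((G.E 0).card + (G.E 1).card : ℝ) / (n.choose 2 : ℝ)
      ≤ ((n.choose 2 : ℝ) + (n : ℝ)) / (n.choose 2 : ℝ) := by
        exact (div_le_div_iff_of_pos_right hC).mpr hnum
    _ = 1 + (n : ℝ) / (n.choose 2 : ℝ) := by
        rw [add_div, div_self hC.ne']
    _ ≤ 1 + 4 / (n : ℝ) := by
        gcongr ?_ + ?_
        · exact le_refl 1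
        · rw [div_le_div_iff₀ hC hn0]
          have := choose_two_bound hn
          calc (n : ℝ) * (n : ℝ) ≤ (4 * n.choose 2 : ℕ) := by exact_mod_cast this
            _ = 4 * (n.choose 2 : ℝ) := by push_cast; ring

lemma t_lower {n : ℕ} (hn : 2 ≤ n) :
    (1 : ℝ) ∈ {x : ℝ | ∃ G : ColGraph 2 2 n, ¬ Tgraph.IsSubgraph G ∧ G.density = x} :=
  ⟨redComplete n, redComplete_free n, redComplete_density hn⟩

end TDegenerateProof

theorem T_degenerate :
    (∀ n : ℕ, ∀ G : ColGraph 2 2 n, ¬ Tgraph.IsSubgraph G →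
      (G.E 0).card + (G.E 1).card ≤ (n + 1).choose 2) ∧
    Filter.Tendsto Tgraph.turanDensityN Filter.atTop (nhds 1) := by
  constructor
  · intro n G h
    exact t_part1 G h
  · have hup : Filter.Tendsto (fun n : ℕ => 1 + 4 / (n : ℝ)) Filter.atTop (nhds 1) := by
      have h1 : Filter.Tendsto (fun _ : ℕ => (1 : ℝ)) Filter.atTop (nhds 1) :=
        tendsto_const_nhds
      simpa using h1.add (tendsto_const_div_atTop_nhds_zero_nat 4)
    apply tendsto_of_tendsto_of_tendsto_of_le_of_le' tendsto_const_nhds hup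
    · filter_upwards [Filter.eventually_ge_atTop 2] with n hn
      exact le_csSup ⟨1 + 4 / (n : ℝ), fun x hx => t_upper hn x hx⟩ (t_lower hn)
    · filter_upwards [Filter.eventually_ge_atTop 2] with n hn
      exact csSup_le ⟨1, t_lower hn⟩ (fun x hx => t_upper hn x hx)
end

section
/- Let H_5 be the {2,3}-graph with vertex set {1,2,3,4,5}, 2-edges {12, 13, 34} and 3-edges {125, 135, 345}. Then the maximum of h_n(G) over all H_5-free {2,3}-graphs G on n vertices tends to 1 as n → ∞; that is, π(H_5) = 1 and H_5 is a degenerate {2,3}-graph. -/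
open Finset Filter

-- neighbor set
def Nbr {n : ℕ} (L : Finset (Finset (Fin n))) (x : Fin n) : Finset (Fin n) :=
  Finset.univ.filter (fun a => a ≠ x ∧ ({x, a} : Finset (Fin n)) ∈ L)

lemma deg_le_nbr {n : ℕ} (L : Finset (Finset (Fin n))) (hcard : ∀ e ∈ L, e.card = 2)
    (x : Fin n) : (L.filter (fun e => x ∈ e)).card ≤ (Nbr L x).card := by
  apply Finset.card_le_card_of_injOn
    (fun e => if h : (e.erase x).Nonempty then (e.erase x).min' h else x)
  · intro e he
    rw [Finset.mem_coe, mem_filter] at he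
    obtain ⟨heL, hxe⟩ := he
    obtain ⟨a, b, hab, rfl⟩ := Finset.card_eq_two.mp (hcard _ heL)
    -- erase x of {a,b} with x ∈ {a,b}
    rcases Finset.mem_insert.mp hxe with rfl | hx
    · have h1 : ({x, b} : Finset (Fin n)).erase x = {b} := by
        rw [Finset.erase_insert (by simp only [Finset.mem_singleton]; exact hab)]
      simp only [Finset.mem_coe]; rw [h1]
      simp only [Finset.singleton_nonempty, dif_pos, Finset.min'_singleton]
      simp [Nbr, Ne.symm hab, heL]
    · have hx' : x = b := by simpa using hx
      subst hx'
      have h1 : ({a, x} : Finset (Fin n)).erase x = {a} := by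
        ext y
        simp only [Finset.mem_erase, Finset.mem_insert, Finset.mem_singleton]
        constructor
        · rintro ⟨h1, h2 | h2⟩ <;> tauto
        · rintro rfl; exact ⟨hab, Or.inl rfl⟩
      simp only [Finset.mem_coe]; rw [h1]
      simp only [Finset.singleton_nonempty, dif_pos, Finset.min'_singleton]
      refine Finset.mem_filter.mpr ⟨Finset.mem_univ _, hab, ?_⟩
      rwa [Finset.pair_comm]
  · intro e he f hf hef
    rw [Finset.coe_filter] at he hf
    obtain ⟨heL, hxe⟩ := he
    obtain ⟨hfL, hxf⟩ := hf
    -- show e = insert x (erase x e) and erase is singleton of the value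
    have he2 : (e.erase x).card = 1 := by
      rw [Finset.card_erase_of_mem hxe, hcard _ heL]
    have hf2 : (f.erase x).card = 1 := by
      rw [Finset.card_erase_of_mem hxf, hcard _ hfL]
    obtain ⟨a, ha⟩ := Finset.card_eq_one.mp he2
    obtain ⟨b, hb⟩ := Finset.card_eq_one.mp hf2
    have : a = b := by
      simpa [ha, hb, Finset.singleton_nonempty] using hef
    have ea : e = insert x {a} := by rw [← ha, Finset.insert_erase hxe]
    have fb : f = insert x {b} := by rw [← hb, Finset.insert_erase hxf]
    rw [ea, fb, this]

lemma exists_good_edge {n : ℕ} (L : Finset (Finset (Fin n)))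
    (hcard : ∀ e ∈ L, e.card = 2) (hL : 2 * n + 1 ≤ L.card) :
    ∃ e ∈ L, ∀ x ∈ e, 3 ≤ (L.filter (fun e' => x ∈ e')).card := by
  by_contra h
  push_neg at h
  have hsub : L ⊆ (Finset.univ.filter
      (fun x : Fin n => (L.filter (fun e' => x ∈ e')).card ≤ 2)).biUnion
      (fun x => L.filter (fun e' => x ∈ e')) := by
    intro e he
    obtain ⟨x, hxe, hdx⟩ := h e he
    refine Finset.mem_biUnion.mpr ⟨x, ?_, ?_⟩
    · simp only [Finset.mem_filter, Finset.mem_univ, true_and]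
      omega
    · exact Finset.mem_filter.mpr ⟨he, hxe⟩
  have h1 := Finset.card_le_card hsub
  have h2 := Finset.card_biUnion_le (s := (Finset.univ.filter
      (fun x : Fin n => (L.filter (fun e' => x ∈ e')).card ≤ 2)))
      (t := fun x => L.filter (fun e' => x ∈ e'))
  have h3 : ∑ x ∈ (Finset.univ.filter
      (fun x : Fin n => (L.filter (fun e' => x ∈ e')).card ≤ 2)),
      (L.filter (fun e' => x ∈ e')).card ≤ 2 * n := by
    calc _ ≤ ∑ _x ∈ (Finset.univ.filter
        (fun x : Fin n => (L.filter (fun e' => x ∈ e')).card ≤ 2)), 2 :=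
          Finset.sum_le_sum (fun x hx => (Finset.mem_filter.mp hx).2)
    _ ≤ 2 * n := by
        rw [Finset.sum_const, smul_eq_mul]
        have := Finset.card_filter_le Finset.univ
          (fun x : Fin n => (L.filter (fun e' => x ∈ e')).card ≤ 2)
        simp only [Finset.card_univ, Fintype.card_fin] at this
        omega
  omega

lemma exists_path {n : ℕ} (L : Finset (Finset (Fin n)))
    (hcard : ∀ e ∈ L, e.card = 2) (hL : 2 * n + 1 ≤ L.card) :
    ∃ a u w b : Fin n, a ≠ u ∧ a ≠ w ∧ a ≠ b ∧ u ≠ w ∧ u ≠ b ∧ w ≠ b ∧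
      ({u, a} : Finset (Fin n)) ∈ L ∧ ({u, w} : Finset (Fin n)) ∈ L ∧
      ({w, b} : Finset (Fin n)) ∈ L := by
  obtain ⟨e, heL, hdeg⟩ := exists_good_edge L hcard hL
  obtain ⟨u, w, huw, rfl⟩ := Finset.card_eq_two.mp (hcard _ heL)
  have hu : 3 ≤ (Nbr L u).card :=
    le_trans (hdeg u (by simp)) (deg_le_nbr L hcard u)
  have hw : 3 ≤ (Nbr L w).card :=
    le_trans (hdeg w (by simp)) (deg_le_nbr L hcard w)
  have ha : ((Nbr L u) \ {w}).Nonempty := by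
    rw [← Finset.card_pos]
    have h2 : (Nbr L u).card ≤ ((Nbr L u) \ {w}).card + ({w} : Finset (Fin n)).card :=
      Finset.card_le_card_sdiff_add_card
    simp only [Finset.card_singleton] at h2
    omega
  obtain ⟨a, haa⟩ := ha
  rw [Finset.mem_sdiff, Finset.mem_singleton] at haa
  obtain ⟨haN, haw⟩ := haa
  rw [Nbr, Finset.mem_filter] at haN
  obtain ⟨-, hau, hua⟩ := haN
  have hb : ((Nbr L w) \ {u, a}).Nonempty := by
    rw [← Finset.card_pos]
    have h2 : (Nbr L w).card ≤ ((Nbr L w) \ {u, a}).card + ({u, a} : Finset (Fin n)).card :=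
      Finset.card_le_card_sdiff_add_card
    have h3 : ({u, a} : Finset (Fin n)).card ≤ 2 := Finset.card_insert_le _ _ |>.trans (by simp)
    omega
  obtain ⟨b, hbb⟩ := hb
  rw [Finset.mem_sdiff, Finset.mem_insert, Finset.mem_singleton] at hbb
  push_neg at hbb
  obtain ⟨hbN, hbu, hba⟩ := hbb
  rw [Nbr, Finset.mem_filter] at hbN
  obtain ⟨-, hbw, hwb⟩ := hbN
  exact ⟨a, u, w, b, hau, haw, fun h => hba h.symm, huw, fun h => hbu h.symm, fun h => hbw h.symm,
    hua, heL, hwb⟩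


def Lv {n : ℕ} (G : Graph23 n) (v : Fin n) : Finset (Finset (Fin n)) :=
  G.E2.filter (fun p => v ∉ p ∧ insert v p ∈ G.E3)

lemma count_main {n : ℕ} (G : Graph23 n) :
    G.E2.card * (n - 2) + 3 * G.E3.card ≤
      3 * n.choose 3 + ∑ v : Fin n, (Lv G v).card := by
  classical
  set Bad : Finset (Σ _ : Finset (Fin n), Fin n) :=
    G.E2.sigma (fun p => (Finset.univ \ p).filter (fun v => insert v p ∉ G.E3)) with hBad
  -- Bad.card ≤ 3 * (choose n 3 - E3.card)
  have hE3sub : G.E3 ⊆ Finset.univ.powersetCard 3 := by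
    intro e he
    exact Finset.mem_powersetCard.mpr ⟨Finset.subset_univ _, G.card3 e he⟩
  have hE3le : G.E3.card ≤ n.choose 3 := by
    have := Finset.card_le_card hE3sub
    rwa [Finset.card_powersetCard, Finset.card_univ, Fintype.card_fin] at this
  have himg : Bad.image (fun x => insert x.2 x.1) ⊆
      Finset.univ.powersetCard 3 \ G.E3 := by
    intro t ht
    obtain ⟨x, hx, rfl⟩ := Finset.mem_image.mp ht
    rw [hBad, Finset.mem_sigma] at hx
    obtain ⟨hx1, hx2⟩ := hx
    rw [Finset.mem_filter, Finset.mem_sdiff] at hx2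
    refine Finset.mem_sdiff.mpr ⟨Finset.mem_powersetCard.mpr ⟨Finset.subset_univ _, ?_⟩, hx2.2⟩
    rw [Finset.card_insert_of_notMem hx2.1.2, G.card2 _ hx1]
  have hfib : ∀ t ∈ Bad.image (fun x => insert x.2 x.1),
      (Bad.filter (fun x => insert x.2 x.1 = t)).card ≤ 3 := by
    intro t ht
    obtain ⟨x0, hx0, rfl⟩ := Finset.mem_image.mp ht
    have hx0' : x0.2 ∉ x0.1 := by
      rw [hBad, Finset.mem_sigma] at hx0
      have := (Finset.mem_filter.mp hx0.2).1
      exact (Finset.mem_sdiff.mp this).2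
    have hcard3 : (insert x0.2 x0.1).card = 3 := by
      rw [Finset.card_insert_of_notMem hx0', G.card2 _ (Finset.mem_sigma.mp hx0).1]
    calc (Bad.filter (fun x => insert x.2 x.1 = insert x0.2 x0.1)).card
        ≤ (insert x0.2 x0.1).card := by
          apply Finset.card_le_card_of_injOn (fun x => x.2)
          · intro x hx
            rw [Finset.mem_coe, Finset.mem_filter] at hx
            rw [← hx.2]
            exact Finset.mem_insert_self _ _
          · intro x hx y hy hxy
            rw [Finset.coe_filter] at hx hy
            obtain ⟨hxB, hxt⟩ := hx
            obtain ⟨hyB, hyt⟩ := hy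
            rw [hBad, Finset.mem_sigma] at hxB hyB
            have hxnot : x.2 ∉ x.1 := (Finset.mem_sdiff.mp (Finset.mem_filter.mp hxB.2).1).2
            have hynot : y.2 ∉ y.1 := (Finset.mem_sdiff.mp (Finset.mem_filter.mp hyB.2).1).2
            have hxy' : x.snd = y.snd := hxy
            have hxt' : insert y.snd x.fst = insert x0.snd x0.fst := by
              rw [← hxy']; exact hxt
            have h : insert y.snd x.fst = insert y.snd y.fst := hxt'.trans hyt.symm
            have e1 : (insert y.snd x.fst).erase y.snd = x.fst :=
              Finset.erase_insert (hxy' ▸ hxnot)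
            have e2 : (insert y.snd y.fst).erase y.snd = y.fst :=
              Finset.erase_insert hynot
            have h1 : x.1 = y.1 := by rw [← e1, ← e2, h]
            exact Sigma.ext h1 (heq_of_eq hxy')
      _ = 3 := hcard3
  have hBadle : Bad.card ≤ 3 * (n.choose 3 - G.E3.card) := by
    calc Bad.card ≤ 3 * (Bad.image (fun x => insert x.2 x.1)).card :=
          Finset.card_le_mul_card_image _ 3 hfib
      _ ≤ 3 * (Finset.univ.powersetCard 3 \ G.E3).card :=
          Nat.mul_le_mul_left 3 (Finset.card_le_card himg)
      _ = 3 * (n.choose 3 - G.E3.card) := by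
          rw [Finset.card_sdiff_of_subset hE3sub, Finset.card_powersetCard, Finset.card_univ,
            Fintype.card_fin]
  have hBadcard : Bad.card =
      ∑ p ∈ G.E2, ((Finset.univ \ p).filter (fun v => insert v p ∉ G.E3)).card :=
    Finset.card_sigma _ _
  have hgood : ∑ p ∈ G.E2, ((Finset.univ \ p).filter (fun v => insert v p ∈ G.E3)).card
      = ∑ v : Fin n, (Lv G v).card := by
    have h1 : ∀ p : Finset (Fin n),
        ((Finset.univ \ p).filter (fun v => insert v p ∈ G.E3)).card
        = ∑ v : Fin n, if v ∉ p ∧ insert v p ∈ G.E3 then 1 else 0 := by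
      intro p
      have he : (Finset.univ \ p).filter (fun v => insert v p ∈ G.E3)
          = Finset.univ.filter (fun v => v ∉ p ∧ insert v p ∈ G.E3) := by
        ext v
        simp only [Finset.mem_filter, Finset.mem_sdiff, Finset.mem_univ, true_and]
      rw [he, Finset.card_filter]
    have h2 : ∀ v : Fin n, (Lv G v).card
        = ∑ p ∈ G.E2, if v ∉ p ∧ insert v p ∈ G.E3 then 1 else 0 := by
      intro v
      rw [Lv, Finset.card_filter]
    simp only [h1, h2]
    exact Finset.sum_comm
  have hsplit : ∀ p ∈ G.E2,
      ((Finset.univ \ p).filter (fun v => insert v p ∈ G.E3)).card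
      + ((Finset.univ \ p).filter (fun v => insert v p ∉ G.E3)).card = n - 2 := by
    intro p hp
    rw [Finset.card_filter_add_card_filter_not, Finset.card_sdiff_of_subset (Finset.subset_univ p),
      Finset.card_univ, Fintype.card_fin, G.card2 p hp]
  have hA : G.E2.card * (n - 2) = (∑ v : Fin n, (Lv G v).card) + Bad.card := by
    calc G.E2.card * (n - 2) = ∑ _p ∈ G.E2, (n - 2) := by
          rw [Finset.sum_const, smul_eq_mul]
      _ = ∑ p ∈ G.E2, (((Finset.univ \ p).filter (fun v => insert v p ∈ G.E3)).card
          + ((Finset.univ \ p).filter (fun v => insert v p ∉ G.E3)).card) :=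
          (Finset.sum_congr rfl (fun p hp => (hsplit p hp).symm))
      _ = (∑ p ∈ G.E2, ((Finset.univ \ p).filter (fun v => insert v p ∈ G.E3)).card)
          + ∑ p ∈ G.E2, ((Finset.univ \ p).filter (fun v => insert v p ∉ G.E3)).card :=
          Finset.sum_add_distrib
      _ = (∑ v : Fin n, (Lv G v).card) + Bad.card := by rw [hgood, hBadcard]
  omega



lemma link_small {n : ℕ} (G : Graph23 n) (hfree : ¬ H5.IsSubgraph G) (v : Fin n) :
    (Lv G v).card ≤ 2 * n := by
  by_contra hcon
  push_neg at hcon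
  obtain ⟨a, u, w, b, hau, haw, hab, huw, hub, hwb, h1, h2, h3⟩ :=
    exists_path (Lv G v) (fun e he => G.card2 e (Finset.mem_filter.mp he).1) (by omega)
  -- facts about v
  have hv1 := Finset.mem_filter.mp h1
  have hv2 := Finset.mem_filter.mp h2
  have hv3 := Finset.mem_filter.mp h3
  have hvu : v ≠ u := fun h => hv1.2.1 (by rw [h]; exact Finset.mem_insert_self _ _)
  have hva : v ≠ a := fun h => hv1.2.1 (by rw [h]; simp)
  have hvw : v ≠ w := fun h => hv3.2.1 (by rw [h]; exact Finset.mem_insert_self _ _)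
  have hvb : v ≠ b := fun h => hv3.2.1 (by rw [h]; simp)
  apply hfree
  refine ⟨![u, a, w, b, v], ?_, ?_, ?_⟩
  · have hua : u ≠ a := Ne.symm hau
    have hwa : w ≠ a := Ne.symm haw
    have hba : b ≠ a := Ne.symm hab
    have hwu : w ≠ u := Ne.symm huw
    have hbu : b ≠ u := Ne.symm hub
    have hbw : b ≠ w := Ne.symm hwb
    have huv : u ≠ v := Ne.symm hvu
    have hav : a ≠ v := Ne.symm hva
    have hwv : w ≠ v := Ne.symm hvw
    have hbv : b ≠ v := Ne.symm hvb
    intro i j hij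
    fin_cases i <;> fin_cases j <;> simp_all
  · intro e he
    have h5e : e = {0,1} ∨ e = {0,2} ∨ e = {2,3} := by
      simpa [H5] using he
    rcases h5e with rfl | rfl | rfl
    · have : ({0,1} : Finset (Fin 5)).image ![u, a, w, b, v] = {u, a} := by
        simp
      rw [this]; exact hv1.1
    · have : ({0,2} : Finset (Fin 5)).image ![u, a, w, b, v] = {u, w} := by
        simp
      rw [this]; exact hv2.1
    · have : ({2,3} : Finset (Fin 5)).image ![u, a, w, b, v] = {w, b} := by
        simp
      rw [this]; exact hv3.1
  · intro e he
    have h5e : e = {0,1,4} ∨ e = {0,2,4} ∨ e = {2,3,4} := by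
      simpa [H5] using he
    rcases h5e with rfl | rfl | rfl
    · have : ({0,1,4} : Finset (Fin 5)).image ![u, a, w, b, v] = insert v {u, a} := by
        ext x; simp; tauto
      rw [this]; exact hv1.2.2
    · have : ({0,2,4} : Finset (Fin 5)).image ![u, a, w, b, v] = insert v {u, w} := by
        ext x; simp; tauto
      rw [this]; exact hv2.2.2
    · have : ({2,3,4} : Finset (Fin 5)).image ![u, a, w, b, v] = insert v {w, b} := by
        ext x; simp; tauto
      rw [this]; exact hv3.2.2


lemma density_bound {n : ℕ} (hn : 3 ≤ n) (G : Graph23 n) (hfree : ¬ H5.IsSubgraph G) :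
    G.density ≤ 1 + 8 / ((n : ℝ) - 2) := by
  have hnat : G.E2.card * (n - 2) + 3 * G.E3.card ≤ 3 * n.choose 3 + 2 * n ^ 2 := by
    have h1 := count_main G
    have h2 : ∑ v : Fin n, (Lv G v).card ≤ 2 * n ^ 2 := by
      calc ∑ v : Fin n, (Lv G v).card ≤ ∑ _v : Fin n, 2 * n :=
            Finset.sum_le_sum (fun v _ => link_small G hfree v)
        _ = 2 * n ^ 2 := by
            rw [Finset.sum_const, Finset.card_univ, Fintype.card_fin, smul_eq_mul]; ring
    omega
  have hid3 : n.choose 3 * 3 = n.choose 2 * (n - 2) := Nat.choose_succ_right_eq n 2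
  have hid2 : n.choose 2 * 2 = n * (n - 1) := by
    have := Nat.choose_succ_right_eq n 1
    rwa [Nat.choose_one_right] at this
  set c2 : ℝ := (n.choose 2 : ℝ) with hc2def
  set c3 : ℝ := (n.choose 3 : ℝ) with hc3def
  have hc2 : 0 < c2 := by
    rw [hc2def]; exact_mod_cast Nat.choose_pos (by omega)
  have hc3 : 0 < c3 := by
    rw [hc3def]; exact_mod_cast Nat.choose_pos hn
  have hm : (0 : ℝ) < (n : ℝ) - 2 := by
    have : (3 : ℝ) ≤ (n : ℝ) := by exact_mod_cast hn
    linarith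
  have hid3R : 3 * c3 = c2 * ((n : ℝ) - 2) := by
    rw [hc2def, hc3def]
    have : ((n.choose 3 * 3 : ℕ) : ℝ) = ((n.choose 2 * (n - 2) : ℕ) : ℝ) :=
      congrArg (Nat.cast : ℕ → ℝ) hid3
    push_cast [Nat.cast_sub (by omega : 2 ≤ n)] at this
    linarith
  have hid6R : 6 * c3 = (n : ℝ) * ((n : ℝ) - 1) * ((n : ℝ) - 2) := by
    have h6 : n.choose 3 * 6 = n * (n - 1) * (n - 2) := by
      calc n.choose 3 * 6 = n.choose 3 * 3 * 2 := by ring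
        _ = n.choose 2 * (n - 2) * 2 := by rw [hid3]
        _ = n.choose 2 * 2 * (n - 2) := by ring
        _ = n * (n - 1) * (n - 2) := by rw [hid2]
    rw [hc3def]
    have : ((n.choose 3 * 6 : ℕ) : ℝ) = ((n * (n - 1) * (n - 2) : ℕ) : ℝ) :=
      congrArg (Nat.cast : ℕ → ℝ) h6
    push_cast [Nat.cast_sub (by omega : 2 ≤ n), Nat.cast_sub (by omega : 1 ≤ n)] at this
    linarith
  have hnatR : (G.E2.card : ℝ) * ((n : ℝ) - 2) + 3 * (G.E3.card : ℝ) ≤ 3 * c3 + 2 * (n : ℝ) ^ 2 := by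
    have : ((G.E2.card * (n - 2) + 3 * G.E3.card : ℕ) : ℝ)
        ≤ ((3 * n.choose 3 + 2 * n ^ 2 : ℕ) : ℝ) := by exact_mod_cast hnat
    push_cast [Nat.cast_sub (by omega : 2 ≤ n)] at this
    rw [hc3def]
    linarith
  have t1 : (G.E2.card : ℝ) / c2 = (G.E2.card : ℝ) * ((n : ℝ) - 2) / (3 * c3) := by
    rw [div_eq_div_iff hc2.ne' (by positivity), hid3R]; ring
  have t2 : (G.E3.card : ℝ) / c3 = 3 * (G.E3.card : ℝ) / (3 * c3) := by
    rw [div_eq_div_iff hc3.ne' (by positivity)]; ring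
  have hdens : G.density = ((G.E2.card : ℝ) * ((n : ℝ) - 2) + 3 * (G.E3.card : ℝ)) / (3 * c3) := by
    rw [Graph23.density, ← hc2def, ← hc3def, t1, t2, ← add_div]
  rw [hdens]
  have step1 : ((G.E2.card : ℝ) * ((n : ℝ) - 2) + 3 * (G.E3.card : ℝ)) / (3 * c3)
      ≤ (3 * c3 + 2 * (n : ℝ) ^ 2) / (3 * c3) := by
    apply div_le_div_of_nonneg_right hnatR (by positivity) |>.trans_eq rfl
  have step2 : (3 * c3 + 2 * (n : ℝ) ^ 2) / (3 * c3) = 1 + 2 * (n : ℝ) ^ 2 / (3 * c3) := by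
    field_simp
  have step3 : 2 * (n : ℝ) ^ 2 / (3 * c3) ≤ 8 / ((n : ℝ) - 2) := by
    rw [div_le_div_iff₀ (by positivity) hm]
    have hn3 : (3 : ℝ) ≤ (n : ℝ) := by exact_mod_cast hn
    nlinarith [hid6R, hm]
  linarith [step1, step2, step3]

lemma one_mem {n : ℕ} (hn : 3 ≤ n) :
    (1 : ℝ) ∈ {x : ℝ | ∃ G : Graph23 n, ¬ H5.IsSubgraph G ∧ G.density = x} := by
  refine ⟨⟨∅, Finset.univ.powersetCard 3, by simp,
    fun e he => (Finset.mem_powersetCard.mp he).2⟩, ?_, ?_⟩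
  · rintro ⟨f, -, h2, -⟩
    have hm : ({0, 1} : Finset (Fin 5)) ∈ H5.E2 := by
      simp [H5]
    simpa using h2 _ hm
  · have hc3 : (n.choose 3 : ℝ) ≠ 0 := by
      exact_mod_cast (Nat.choose_pos hn).ne'
    simp [Graph23.density, Finset.card_powersetCard, div_self hc3]

lemma density_le_two {n : ℕ} (hn : 3 ≤ n) (G : Graph23 n) : G.density ≤ 2 := by
  have hc2 : (0 : ℝ) < (n.choose 2 : ℝ) := by exact_mod_cast Nat.choose_pos (by omega)
  have hc3 : (0 : ℝ) < (n.choose 3 : ℝ) := by exact_mod_cast Nat.choose_pos hn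
  have h2 : (G.E2.card : ℝ) ≤ (n.choose 2 : ℝ) := by
    have hsub : G.E2 ⊆ Finset.univ.powersetCard 2 := fun e he =>
      Finset.mem_powersetCard.mpr ⟨Finset.subset_univ _, G.card2 e he⟩
    have := Finset.card_le_card hsub
    rw [Finset.card_powersetCard, Finset.card_univ, Fintype.card_fin] at this
    exact_mod_cast this
  have h3 : (G.E3.card : ℝ) ≤ (n.choose 3 : ℝ) := by
    have hsub : G.E3 ⊆ Finset.univ.powersetCard 3 := fun e he =>
      Finset.mem_powersetCard.mpr ⟨Finset.subset_univ _, G.card3 e he⟩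
    have := Finset.card_le_card hsub
    rw [Finset.card_powersetCard, Finset.card_univ, Fintype.card_fin] at this
    exact_mod_cast this
  have d2 : (G.E2.card : ℝ) / (n.choose 2 : ℝ) ≤ 1 := by
    rw [div_le_one hc2]; exact h2
  have d3 : (G.E3.card : ℝ) / (n.choose 3 : ℝ) ≤ 1 := by
    rw [div_le_one hc3]; exact h3
  rw [Graph23.density]; linarith

theorem H5_degenerate :
    Filter.Tendsto H5.turanDensityN Filter.atTop (nhds 1) := by
  have hupper : Filter.Tendsto (fun n : ℕ => 1 + 8 / ((n : ℝ) - 2)) Filter.atTop (nhds 1) := by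
    have h1 : Filter.Tendsto (fun n : ℕ => (n : ℝ) - 2) Filter.atTop Filter.atTop :=
      Filter.tendsto_atTop_add_const_right _ _ tendsto_natCast_atTop_atTop
    have h2 : Filter.Tendsto (fun n : ℕ => 8 / ((n : ℝ) - 2)) Filter.atTop (nhds 0) :=
      Filter.Tendsto.div_atTop tendsto_const_nhds h1
    simpa using tendsto_const_nhds.add h2
  apply tendsto_of_tendsto_of_tendsto_of_le_of_le' tendsto_const_nhds hupper
  · filter_upwards [Filter.eventually_ge_atTop 3] with n hn
    exact le_csSup ⟨2, fun x hx => by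
      obtain ⟨G, -, rfl⟩ := hx
      exact density_le_two hn G⟩ (one_mem hn)
  · filter_upwards [Filter.eventually_ge_atTop 3] with n hn
    apply csSup_le ⟨1, one_mem hn⟩
    rintro x ⟨G, hf, rfl⟩
    exact density_bound hn G hf
end
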